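/- arXiv:1106.4119 — 5 statements merged into one kernel-verified Lean document; each statement's English description precedes it below -/
import Mathlib

section
/- Let T be a locally finite tree without ends and ξ₁,ξ₂,ξ₃,ξ₄ four pairwise distinct boundary points. Then c(ξ₁,ξ₂,ξ₃,ξ₄) = e^{−L}, where L is the signed length of the intersection [ξ₁,ξ₂] ∩ [ξ₃,ξ₄] of the bi-infinite geodesics, the sign depending on whether the orientations induced from (ξ₁ to ξ₂) and (ξ₃ to ξ₄) on the common segment agree. -/
open SimpleGraph

variable {V : Type*}

/-- A geodesic ray in the graph `G` starting at the vertex `x`. -/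
structure TreeRay (G : SimpleGraph V) (x : V) where
  toFun : ℕ → V
  init : toFun 0 = x
  adj : ∀ n, G.Adj (toFun n) (toFun (n + 1))
  isGeodesic : ∀ n, G.dist x (toFun n) = n

/-- Two rays (possibly with different base points) represent the same boundary
point if they eventually coincide (up to a shift of parameter). -/
def RayEquiv {G : SimpleGraph V} {x y : V} (r : TreeRay G x) (s : TreeRay G y) : Prop :=
  ∃ a b : ℕ, ∀ n, r.toFun (n + a) = s.toFun (n + b)

/-- The length of the common initial segment of two geodesic rays from the same
base point. -/
noncomputable def rayOverlap {G : SimpleGraph V} {x : V} (r s : TreeRay G x) : ℕ :=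
  sSup {n | r.toFun n = s.toFun n}

/-- The visual metric `ρ_{x}` on the boundary of a tree:
`ρ_x(ξ,η) = e^{−L}` where `L` is the length of `[x,ξ] ∩ [x,η]`, and `ρ_x(ξ,ξ) = 0`. -/
noncomputable def rho {G : SimpleGraph V} {x : V} (r s : TreeRay G x) : ℝ :=
  letI := Classical.decEq (TreeRay G x)
  if r = s then 0 else Real.exp (-(rayOverlap r s : ℝ))

/-- The cross-ratio of four boundary points with respect to the base point `x`. -/
noncomputable def crossRatio {G : SimpleGraph V} {x : V} (ξ₁ ξ₂ ξ₃ ξ₄ : TreeRay G x) : ℝ :=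
  (rho ξ₃ ξ₁ * rho ξ₄ ξ₂) / (rho ξ₃ ξ₂ * rho ξ₄ ξ₁)

/-- A locally finite tree is *without ends* if every vertex has valency at least two
(equivalently, the complement of every vertex is disconnected). -/
def NoEnds (G : SimpleGraph V) [G.LocallyFinite] : Prop :=
  ∀ v : V, 2 ≤ G.degree v

/-- A bi-infinite geodesic in the graph `G`. -/
structure BiGeodesic (G : SimpleGraph V) where
  toFun : ℤ → V
  adj : ∀ n : ℤ, G.Adj (toFun n) (toFun (n + 1))
  isGeodesic : ∀ m n : ℤ, (G.dist (toFun m) (toFun n) : ℤ) = |m - n|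

/-- The positive end of the bi-infinite geodesic `g` is the boundary point `ξ`. -/
def BiGeodesic.PosEnd {G : SimpleGraph V} {x : V} (g : BiGeodesic G) (ξ : TreeRay G x) : Prop :=
  ∃ (a : ℤ) (b : ℕ), ∀ n : ℕ, g.toFun (a + n) = ξ.toFun (b + n)

/-- The negative end of the bi-infinite geodesic `g` is the boundary point `ξ`. -/
def BiGeodesic.NegEnd {G : SimpleGraph V} {x : V} (g : BiGeodesic G) (ξ : TreeRay G x) : Prop :=
  ∃ (a : ℤ) (b : ℕ), ∀ n : ℕ, g.toFun (a - n) = ξ.toFun (b + n)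

namespace CRAux

variable {G : SimpleGraph V}

lemma walk_exists (f : ℕ → V) :
    ∀ n : ℕ, (∀ k, k < n → G.Adj (f k) (f (k+1))) →
    ∃ w : G.Walk (f 0) (f n), w.length = n ∧ w.support = (List.range (n+1)).map f := by
  intro n
  induction n with
  | zero => intro _; exact ⟨Walk.nil, rfl, by rw [List.range_succ]; simp⟩
  | succ n ih =>
    intro hadj
    obtain ⟨w, hl, hs⟩ := ih (fun k hk => hadj k (by omega))
    refine ⟨w.concat (hadj n (by omega)), ?_, ?_⟩
    · simp [Walk.length_concat, hl]
    · rw [Walk.support_concat, hs, List.range_succ]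
      simp [List.range_succ]

lemma path_length_eq_dist (hT : G.IsTree) {u v : V} (p : G.Walk u v) (hp : p.IsPath) :
    p.length = G.dist u v := by
  obtain ⟨q, hq, hql⟩ := hT.1.exists_path_of_dist u v
  have h1 : (⟨p, hp⟩ : G.Path u v) = ⟨q, hq⟩ := hT.2.path_unique _ _
  have h2 : p = q := congrArg Subtype.val h1
  rw [h2, hql]

lemma dist_of_chain (hT : G.IsTree) (f : ℕ → V) (n : ℕ)
    (hadj : ∀ k, k < n → G.Adj (f k) (f (k+1)))
    (hinj : ∀ k k', k ≤ n → k' ≤ n → f k = f k' → k = k') :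
    G.dist (f 0) (f n) = n := by
  obtain ⟨w, hl, hs⟩ := walk_exists f n hadj
  have hnodup : w.support.Nodup := by
    rw [hs]
    refine List.Nodup.map_on ?_ List.nodup_range
    intro x hx y hy hxy
    exact hinj x y (by simp at hx; omega) (by simp at hy; omega) hxy
  have := path_length_eq_dist hT w ((Walk.isPath_def w).mpr hnodup)
  omega

lemma ray_inj {x : V} (r : TreeRay G x) {m n : ℕ} (h : r.toFun m = r.toFun n) : m = n := by
  have hm := r.isGeodesic m
  have hn := r.isGeodesic n
  rw [h] at hm; omega

lemma ray_agree (hT : G.IsTree) {x : V} (r s : TreeRay G x) {n : ℕ}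
    (h : r.toFun n = s.toFun n) {k : ℕ} (hk : k ≤ n) : r.toFun k = s.toFun k := by
  obtain ⟨wr, hrl, hrs⟩ := walk_exists r.toFun n (fun k _ => r.adj k)
  obtain ⟨ws, hsl, hss⟩ := walk_exists s.toFun n (fun k _ => s.adj k)
  have hrp : wr.IsPath := by
    rw [Walk.isPath_def, hrs]
    exact List.Nodup.map_on (fun p _ q _ hpq => ray_inj r hpq) List.nodup_range
  have hsp : ws.IsPath := by
    rw [Walk.isPath_def, hss]
    exact List.Nodup.map_on (fun p _ q _ hpq => ray_inj s hpq) List.nodup_range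
  let ws' : G.Walk (r.toFun 0) (r.toFun n) := ws.copy (by rw [r.init, s.init]) h.symm
  have hsp' : ws'.IsPath := by
    rw [Walk.isPath_def, Walk.support_copy, ← Walk.isPath_def]; exact hsp
  have h1 : (⟨wr, hrp⟩ : G.Path (r.toFun 0) (r.toFun n)) = ⟨ws', hsp'⟩ := hT.2.path_unique _ _
  have h2 : wr.support = ws'.support := congrArg (fun p => (Subtype.val p).support) h1
  rw [hrs, Walk.support_copy, hss] at h2
  have h3 : ((List.range (n+1)).map r.toFun)[k]? = ((List.range (n+1)).map s.toFun)[k]? := by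
    rw [h2]
  rw [List.getElem?_map, List.getElem?_map, List.getElem?_range (by omega)] at h3
  simpa using h3

lemma treeRay_ext {x : V} {r s : TreeRay G x} (h : r.toFun = s.toFun) : r = s := by
  cases r; cases s; simpa using h

lemma overlap_mem (hT : G.IsTree) {x : V} {r s : TreeRay G x} (hne : r ≠ s) :
    r.toFun (rayOverlap r s) = s.toFun (rayOverlap r s) ∧
      ∀ k, r.toFun k = s.toFun k → k ≤ rayOverlap r s := by
  have hbdd : BddAbove {n | r.toFun n = s.toFun n} := by
    by_contra hb
    apply hne
    apply treeRay_ext; funext k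
    rw [not_bddAbove_iff] at hb
    obtain ⟨m, hm, hkm⟩ := hb k
    exact ray_agree hT r s hm (le_of_lt hkm)
  have hne0 : {n | r.toFun n = s.toFun n}.Nonempty := ⟨0, by simp [r.init, s.init]⟩
  exact ⟨Nat.sSup_mem hne0 hbdd, fun k hk => le_csSup hbdd hk⟩

lemma overlap_dist (hT : G.IsTree) {x : V} {r s : TreeRay G x} (hne : r ≠ s) {n m : ℕ}
    (hn : rayOverlap r s ≤ n) (hm : rayOverlap r s ≤ m) :
    (G.dist (r.toFun n) (s.toFun m) : ℤ) = n + m - 2 * rayOverlap r s := by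
  obtain ⟨hL, hmax⟩ := overlap_mem hT hne
  set L := rayOverlap r s with hLdef
  set f : ℕ → V := fun k => if k ≤ n - L then r.toFun (n - k) else s.toFun (k - (n - L) + L)
    with hf
  have hstart : f 0 = r.toFun n := by simp [hf]
  have hend : f ((n-L)+(m-L)) = s.toFun m := by
    by_cases hc : (n-L)+(m-L) ≤ n-L
    · have hm' : m = L := by omega
      simp only [hf, if_pos hc]
      rw [show n - ((n-L)+(m-L)) = L by omega, hL, hm']
    · simp only [hf, if_neg hc]
      congr 1; omega
  have hadj : ∀ k, k < (n-L)+(m-L) → G.Adj (f k) (f (k+1)) := by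
    intro k hk
    by_cases h1 : k + 1 ≤ n - L
    · have h0 : k ≤ n - L := by omega
      simp only [hf, if_pos h0, if_pos h1]
      rw [show n - k = (n - (k+1)) + 1 by omega]
      exact (r.adj _).symm
    · by_cases h0 : k ≤ n - L
      · simp only [hf, if_pos h0, if_neg h1]
        rw [show n - k = L by omega, show k + 1 - (n - L) + L = L + 1 by omega, hL]
        exact s.adj L
      · simp only [hf, if_neg h0, if_neg h1]
        rw [show k + 1 - (n-L) + L = (k - (n-L) + L) + 1 by omega]
        exact s.adj _
  have key : ∀ p q : ℕ, p ≤ n - L → n - L < q → f p ≠ f q := by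
    intro p q hp hq hpq
    simp only [hf, if_pos hp, if_neg (by omega : ¬ q ≤ n - L)] at hpq
    have h1 := r.isGeodesic (n - p)
    have h2 := s.isGeodesic (q - (n-L) + L)
    rw [hpq] at h1
    have hd : n - p = q - (n-L) + L := by omega
    rw [hd] at hpq
    have := hmax _ hpq
    omega
  have hinj : ∀ k k', k ≤ (n-L)+(m-L) → k' ≤ (n-L)+(m-L) → f k = f k' → k = k' := by
    intro k k' hkle hk'le hfe
    by_cases c1 : k ≤ n - L <;> by_cases c2 : k' ≤ n - L
    · simp only [hf, if_pos c1, if_pos c2] at hfe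
      have := ray_inj r hfe; omega
    · exact absurd hfe (key k k' c1 (by omega))
    · exact absurd hfe.symm (key k' k c2 (by omega))
    · simp only [hf, if_neg c1, if_neg c2] at hfe
      have := ray_inj s hfe; omega
  have hres := dist_of_chain hT f ((n-L)+(m-L)) hadj hinj
  rw [hstart, hend] at hres
  rw [hres]
  push_cast
  omega

lemma bigeo_inj (g : BiGeodesic G) {s t : ℤ} (h : g.toFun s = g.toFun t) : s = t := by
  have h1 := g.isGeodesic s t
  rw [h, SimpleGraph.dist_self] at h1
  have : |s - t| = 0 := by exact_mod_cast h1.symm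
  rw [abs_eq_zero, sub_eq_zero] at this
  exact this

lemma bigeo_adj (g : BiGeodesic G) {m n : ℤ} (h : m = n + 1 ∨ n = m + 1) :
    G.Adj (g.toFun m) (g.toFun n) := by
  rcases h with rfl | rfl
  · exact (g.adj n).symm
  · exact g.adj m

lemma dist_glue (hT : G.IsTree) (g h : BiGeodesic G) (u v ε δ : ℤ)
    (hε : ε = 1 ∨ ε = -1) (hδ : δ = 1 ∨ δ = -1)
    (huv : g.toFun u = h.toFun v) (p q : ℕ)
    (hsep : ∀ j i : ℕ, j ≤ p → i ≤ q →
      g.toFun (u + ε * j) = h.toFun (v + δ * i) → j = 0 ∧ i = 0) :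
    G.dist (g.toFun (u + ε * p)) (h.toFun (v + δ * q)) = p + q := by
  set f : ℕ → V := fun k =>
    if k ≤ p then g.toFun (u + ε * ((p:ℤ) - k)) else h.toFun (v + δ * ((k:ℤ) - p)) with hf
  have hstart : f 0 = g.toFun (u + ε * p) := by simp [hf]
  have hend : f (p + q) = h.toFun (v + δ * q) := by
    rcases Nat.eq_zero_or_pos q with hq0 | hq0
    · subst hq0
      simp only [hf, Nat.add_zero, if_pos (le_refl p)]
      rw [show u + ε * ((p:ℤ) - p) = u by ring,
        show v + δ * ((0:ℕ):ℤ) = v by push_cast; ring, huv]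
    · simp only [hf, if_neg (by omega : ¬ p + q ≤ p)]
      congr 1; push_cast; ring
  have hadj : ∀ k, k < p + q → G.Adj (f k) (f (k+1)) := by
    intro k hk
    by_cases h1 : k + 1 ≤ p
    · have h0 : k ≤ p := by omega
      simp only [hf, if_pos h0, if_pos h1]
      apply bigeo_adj
      rcases hε with rfl | rfl
      · left; push_cast; ring
      · right; push_cast; ring
    · by_cases h0 : k ≤ p
      · have hkp : k = p := by omega
        simp only [hf, if_pos h0, if_neg h1]
        rw [show u + ε * ((p:ℤ) - k) = u by rw [hkp]; ring,
          show v + δ * (((k+1:ℕ):ℤ) - p) = v + δ by rw [hkp]; push_cast; ring, huv]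
        apply bigeo_adj
        rcases hδ with rfl | rfl
        · right; ring
        · left; ring
      · simp only [hf, if_neg h0, if_neg h1]
        apply bigeo_adj
        rcases hδ with rfl | rfl
        · right; push_cast; ring
        · left; push_cast; ring
  have hinj : ∀ k k', k ≤ p + q → k' ≤ p + q → f k = f k' → k = k' := by
    intro k k' hk hk' hfe
    by_cases c1 : k ≤ p <;> by_cases c2 : k' ≤ p
    · simp only [hf, if_pos c1, if_pos c2] at hfe
      have := bigeo_inj g hfe
      rcases hε with rfl | rfl <;> omega
    · simp only [hf, if_pos c1, if_neg c2] at hfe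
      rw [show ((p:ℤ) - (k:ℤ)) = ((p - k : ℕ) : ℤ) by omega,
        show ((k':ℤ) - (p:ℤ)) = ((k' - p : ℕ) : ℤ) by omega] at hfe
      obtain ⟨e1, e2⟩ := hsep (p - k) (k' - p) (by omega) (by omega) hfe
      omega
    · simp only [hf, if_neg c1, if_pos c2] at hfe
      rw [show ((p:ℤ) - (k':ℤ)) = ((p - k' : ℕ) : ℤ) by omega,
        show ((k:ℤ) - (p:ℤ)) = ((k - p : ℕ) : ℤ) by omega] at hfe
      obtain ⟨e1, e2⟩ := hsep (p - k') (k - p) (by omega) (by omega) hfe.symm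
      omega
    · simp only [hf, if_neg c1, if_neg c2] at hfe
      have := bigeo_inj h hfe
      rcases hδ with rfl | rfl <;> omega
  have hres := dist_of_chain hT f (p + q) hadj hinj
  rw [hstart, hend] at hres
  exact hres

lemma inter_spec (g h : BiGeodesic G) (a : ℤ) (ℓ : ℕ)
    (hcap : Set.range g.toFun ∩ Set.range h.toFun = g.toFun '' Set.Icc a (a + ℓ))
    {s t : ℤ} (hst : g.toFun s = h.toFun t) : a ≤ s ∧ s ≤ a + ℓ := by
  have hmem : g.toFun s ∈ Set.range g.toFun ∩ Set.range h.toFun := ⟨⟨s, rfl⟩, ⟨t, hst.symm⟩⟩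
  rw [hcap] at hmem
  obtain ⟨c, hc, hcs⟩ := hmem
  have hcseq := bigeo_inj g hcs
  exact ⟨hcseq ▸ hc.1, hcseq ▸ hc.2⟩

lemma inter_t_pos (g h : BiGeodesic G) (a b : ℤ) (ℓ : ℕ)
    (hcap : Set.range g.toFun ∩ Set.range h.toFun = g.toFun '' Set.Icc a (a + ℓ))
    (hor : ∀ i : ℕ, i ≤ ℓ → g.toFun (a + i) = h.toFun (b + i))
    {s t : ℤ} (hst : g.toFun s = h.toFun t) : a ≤ s ∧ s ≤ a + ℓ ∧ t = b + (s - a) := by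
  obtain ⟨h1, h2⟩ := inter_spec g h a ℓ hcap hst
  refine ⟨h1, h2, ?_⟩
  have h3 := hor (s - a).toNat (by omega)
  rw [show a + ((s - a).toNat : ℤ) = s by omega] at h3
  have := bigeo_inj h (h3.symm.trans hst)
  omega

lemma inter_t_neg (g h : BiGeodesic G) (a b : ℤ) (ℓ : ℕ)
    (hcap : Set.range g.toFun ∩ Set.range h.toFun = g.toFun '' Set.Icc a (a + ℓ))
    (hor : ∀ i : ℕ, i ≤ ℓ → g.toFun (a + i) = h.toFun (b + ℓ - i))
    {s t : ℤ} (hst : g.toFun s = h.toFun t) : a ≤ s ∧ s ≤ a + ℓ ∧ t = b + ℓ - (s - a) := by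
  obtain ⟨h1, h2⟩ := inter_spec g h a ℓ hcap hst
  refine ⟨h1, h2, ?_⟩
  have h3 := hor (s - a).toNat (by omega)
  rw [show a + ((s - a).toNat : ℤ) = s by omega] at h3
  have := bigeo_inj h (h3.symm.trans hst)
  omega

lemma exists_nat_ge_list (l : List ℤ) : ∃ n : ℕ, ∀ x ∈ l, x ≤ n := by
  induction l with
  | nil => exact ⟨0, by simp⟩
  | cons y l ih =>
    obtain ⟨n, hn⟩ := ih
    refine ⟨y.toNat + n, ?_⟩
    intro x hx
    rcases List.mem_cons.mp hx with rfl | hx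
    · omega
    · have := hn x hx; omega

set_option maxHeartbeats 1000000 in
lemma master (hT : G.IsTree) {x₀ : V} (ξ₁ ξ₂ ξ₃ ξ₄ : TreeRay G x₀)
    (h31 : ξ₃ ≠ ξ₁) (h41 : ξ₄ ≠ ξ₁) (h32 : ξ₃ ≠ ξ₂) (h42 : ξ₄ ≠ ξ₂)
    (g h : BiGeodesic G)
    (hg₁ : g.NegEnd ξ₁) (hg₂ : g.PosEnd ξ₂) (hh₃ : h.NegEnd ξ₃) (hh₄ : h.PosEnd ξ₄)
    (a b : ℤ) (ℓ c13 c14 c23 c24 : ℕ)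
    (H13 : ∀ N M : ℕ, G.dist (g.toFun (a - N)) (h.toFun (b - M)) = N + M + c13)
    (H14 : ∀ N M : ℕ, G.dist (g.toFun (a - N)) (h.toFun (b + ℓ + M)) = N + M + c14)
    (H23 : ∀ N M : ℕ, G.dist (g.toFun (a + ℓ + N)) (h.toFun (b - M)) = N + M + c23)
    (H24 : ∀ N M : ℕ, G.dist (g.toFun (a + ℓ + N)) (h.toFun (b + ℓ + M)) = N + M + c24) :
    crossRatio ξ₁ ξ₂ ξ₃ ξ₄ = Real.exp (((c13:ℝ) + c24 - c23 - c14) / 2) := by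
  obtain ⟨a₁, b₁, e₁⟩ := hg₁
  obtain ⟨a₂, b₂, e₂⟩ := hg₂
  obtain ⟨a₃, b₃, e₃⟩ := hh₃
  obtain ⟨a₄, b₄, e₄⟩ := hh₄
  obtain ⟨n, hall⟩ := exists_nat_ge_list [a₁ - a, a + ℓ - a₂, a₃ - b, b + ℓ - a₄,
    (rayOverlap ξ₃ ξ₁ : ℤ) - b₁, (rayOverlap ξ₄ ξ₁ : ℤ) - b₁,
    (rayOverlap ξ₃ ξ₂ : ℤ) - b₂, (rayOverlap ξ₄ ξ₂ : ℤ) - b₂,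
    (rayOverlap ξ₃ ξ₁ : ℤ) - b₃, (rayOverlap ξ₃ ξ₂ : ℤ) - b₃,
    (rayOverlap ξ₄ ξ₁ : ℤ) - b₄, (rayOverlap ξ₄ ξ₂ : ℤ) - b₄]
  have hc1 : a₁ - a ≤ (n:ℤ) := hall _ (by simp)
  have hc2 : a + ℓ - a₂ ≤ (n:ℤ) := hall _ (by simp)
  have hc3 : a₃ - b ≤ (n:ℤ) := hall _ (by simp)
  have hc4 : b + ℓ - a₄ ≤ (n:ℤ) := hall _ (by simp)
  have hc5 : rayOverlap ξ₃ ξ₁ ≤ b₁ + n := by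
    have := hall ((rayOverlap ξ₃ ξ₁ : ℤ) - b₁) (by simp); omega
  have hc6 : rayOverlap ξ₄ ξ₁ ≤ b₁ + n := by
    have := hall ((rayOverlap ξ₄ ξ₁ : ℤ) - b₁) (by simp); omega
  have hc7 : rayOverlap ξ₃ ξ₂ ≤ b₂ + n := by
    have := hall ((rayOverlap ξ₃ ξ₂ : ℤ) - b₂) (by simp); omega
  have hc8 : rayOverlap ξ₄ ξ₂ ≤ b₂ + n := by
    have := hall ((rayOverlap ξ₄ ξ₂ : ℤ) - b₂) (by simp); omega
  have hc9 : rayOverlap ξ₃ ξ₁ ≤ b₃ + n := by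
    have := hall ((rayOverlap ξ₃ ξ₁ : ℤ) - b₃) (by simp); omega
  have hc10 : rayOverlap ξ₃ ξ₂ ≤ b₃ + n := by
    have := hall ((rayOverlap ξ₃ ξ₂ : ℤ) - b₃) (by simp); omega
  have hc11 : rayOverlap ξ₄ ξ₁ ≤ b₄ + n := by
    have := hall ((rayOverlap ξ₄ ξ₁ : ℤ) - b₄) (by simp); omega
  have hc12 : rayOverlap ξ₄ ξ₂ ≤ b₄ + n := by
    have := hall ((rayOverlap ξ₄ ξ₂ : ℤ) - b₄) (by simp); omega
  obtain ⟨N₁, hN1⟩ : ∃ N : ℕ, (N:ℤ) = a - a₁ + n := ⟨(a - a₁ + n).toNat, by omega⟩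
  obtain ⟨N₂, hN2⟩ : ∃ N : ℕ, (N:ℤ) = a₂ + n - (a + ℓ) := ⟨(a₂ + n - (a + ℓ)).toNat, by omega⟩
  obtain ⟨N₃, hN3⟩ : ∃ N : ℕ, (N:ℤ) = b - a₃ + n := ⟨(b - a₃ + n).toNat, by omega⟩
  obtain ⟨N₄, hN4⟩ : ∃ N : ℕ, (N:ℤ) = a₄ + n - (b + ℓ) := ⟨(a₄ + n - (b + ℓ)).toNat, by omega⟩
  have hu1 : g.toFun (a - (N₁:ℤ)) = ξ₁.toFun (b₁ + n) := by
    rw [show a - (N₁:ℤ) = a₁ - n by omega]; exact e₁ n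
  have hu2 : g.toFun (a + ℓ + (N₂:ℤ)) = ξ₂.toFun (b₂ + n) := by
    rw [show a + (ℓ:ℤ) + (N₂:ℤ) = a₂ + n by omega]; exact e₂ n
  have hu3 : h.toFun (b - (N₃:ℤ)) = ξ₃.toFun (b₃ + n) := by
    rw [show b - (N₃:ℤ) = a₃ - n by omega]; exact e₃ n
  have hu4 : h.toFun (b + ℓ + (N₄:ℤ)) = ξ₄.toFun (b₄ + n) := by
    rw [show b + (ℓ:ℤ) + (N₄:ℤ) = a₄ + n by omega]; exact e₄ n
  have d31 : G.dist (ξ₃.toFun (b₃ + n)) (ξ₁.toFun (b₁ + n)) = N₁ + N₃ + c13 := by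
    rw [← hu3, ← hu1, SimpleGraph.dist_comm]; exact H13 N₁ N₃
  have d42 : G.dist (ξ₄.toFun (b₄ + n)) (ξ₂.toFun (b₂ + n)) = N₂ + N₄ + c24 := by
    rw [← hu4, ← hu2, SimpleGraph.dist_comm]; exact H24 N₂ N₄
  have d32 : G.dist (ξ₃.toFun (b₃ + n)) (ξ₂.toFun (b₂ + n)) = N₂ + N₃ + c23 := by
    rw [← hu3, ← hu2, SimpleGraph.dist_comm]; exact H23 N₂ N₃
  have d41 : G.dist (ξ₄.toFun (b₄ + n)) (ξ₁.toFun (b₁ + n)) = N₁ + N₄ + c14 := by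
    rw [← hu4, ← hu1, SimpleGraph.dist_comm]; exact H14 N₁ N₄
  have o31 := overlap_dist hT h31 hc9 hc5
  have o42 := overlap_dist hT h42 hc12 hc8
  have o32 := overlap_dist hT h32 hc10 hc7
  have o41 := overlap_dist hT h41 hc11 hc6
  have key : 2 * ((rayOverlap ξ₃ ξ₂ : ℤ) + (rayOverlap ξ₄ ξ₁ : ℤ)
      - (rayOverlap ξ₃ ξ₁ : ℤ) - (rayOverlap ξ₄ ξ₂ : ℤ)) = (c13:ℤ) + c24 - c23 - c14 := by
    omega
  simp only [crossRatio, rho]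
  rw [if_neg h31, if_neg h42, if_neg h32, if_neg h41]
  rw [← Real.exp_add, ← Real.exp_add, ← Real.exp_sub]
  congr 1
  have key' : (2:ℝ) * ((rayOverlap ξ₃ ξ₂ : ℝ) + (rayOverlap ξ₄ ξ₁ : ℝ)
      - (rayOverlap ξ₃ ξ₁ : ℝ) - (rayOverlap ξ₄ ξ₂ : ℝ)) = (c13:ℝ) + c24 - c23 - c14 := by
    exact_mod_cast key
  linarith

end CRAux

/-- For four pairwise distinct boundary points `ξ₁,ξ₂,ξ₃,ξ₄` of a locally finite tree
without ends, `c(ξ₁,ξ₂,ξ₃,ξ₄) = e^{−L}` where `L` is the *signed* length of the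
intersection `[ξ₁,ξ₂] ∩ [ξ₃,ξ₄]` of the two bi-infinite geodesics: the sign is positive
(`L = ℓ`) if the orientations induced from `(ξ₁ → ξ₂)` and `(ξ₃ → ξ₄)` agree on the common
segment of length `ℓ`, and negative (`L = −ℓ`) if they disagree. -/
theorem crossRatio_eq_exp_signed_overlap {V : Type*} (G : SimpleGraph V) (hT : G.IsTree)
    [G.LocallyFinite] (hends : NoEnds G) (x₀ : V)
    (ξ₁ ξ₂ ξ₃ ξ₄ : TreeRay G x₀)
    (hdist : ξ₁ ≠ ξ₂ ∧ ξ₁ ≠ ξ₃ ∧ ξ₁ ≠ ξ₄ ∧ ξ₂ ≠ ξ₃ ∧ ξ₂ ≠ ξ₄ ∧ ξ₃ ≠ ξ₄)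
    (g h : BiGeodesic G)
    (hg₁ : g.NegEnd ξ₁) (hg₂ : g.PosEnd ξ₂) (hh₃ : h.NegEnd ξ₃) (hh₄ : h.PosEnd ξ₄)
    (a b : ℤ) (ℓ : ℕ)
    (hcap : Set.range g.toFun ∩ Set.range h.toFun = g.toFun '' Set.Icc a (a + ℓ)) :
    ((∀ i : ℕ, i ≤ ℓ → g.toFun (a + i) = h.toFun (b + i)) →
        crossRatio ξ₁ ξ₂ ξ₃ ξ₄ = Real.exp (-(ℓ : ℝ))) ∧
      ((∀ i : ℕ, i ≤ ℓ → g.toFun (a + i) = h.toFun (b + ℓ - i)) →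
        crossRatio ξ₁ ξ₂ ξ₃ ξ₄ = Real.exp (ℓ : ℝ)) := by
  obtain ⟨h12, h13, h14, h23, h24, h34⟩ := hdist
  constructor
  · intro hor
    have hub : g.toFun a = h.toFun b := by
      have h0 := hor 0 (Nat.zero_le _)
      simpa using h0
    have hul : g.toFun (a + (ℓ:ℤ)) = h.toFun (b + (ℓ:ℤ)) := hor ℓ le_rfl
    have H13 : ∀ N M : ℕ, G.dist (g.toFun (a - N)) (h.toFun (b - M)) = N + M + 0 := by
      intro N M
      have hsep : ∀ j i : ℕ, j ≤ N → i ≤ M →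
          g.toFun (a + (-1) * j) = h.toFun (b + (-1) * i) → j = 0 ∧ i = 0 := by
        intro j i _ _ hji
        obtain ⟨e1, e2, e3⟩ := CRAux.inter_t_pos g h a b ℓ hcap hor hji
        constructor <;> omega
      have hd := CRAux.dist_glue hT g h a b (-1) (-1) (Or.inr rfl) (Or.inr rfl) hub N M hsep
      rw [show a + (-1) * (N:ℤ) = a - N by ring, show b + (-1) * (M:ℤ) = b - M by ring] at hd
      omega
    have H14 : ∀ N M : ℕ, G.dist (g.toFun (a - N)) (h.toFun (b + ℓ + M)) = N + M + ℓ := by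
      intro N M
      have hsep : ∀ j i : ℕ, j ≤ ℓ + N → i ≤ M →
          g.toFun (a + ℓ + (-1) * j) = h.toFun (b + ℓ + 1 * i) → j = 0 ∧ i = 0 := by
        intro j i _ _ hji
        obtain ⟨e1, e2, e3⟩ := CRAux.inter_t_pos g h a b ℓ hcap hor hji
        constructor <;> omega
      have hd := CRAux.dist_glue hT g h (a + ℓ) (b + ℓ) (-1) 1 (Or.inr rfl) (Or.inl rfl)
        hul (ℓ + N) M hsep
      rw [show a + (ℓ:ℤ) + (-1) * ((ℓ+N:ℕ):ℤ) = a - N by push_cast; ring,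
        show b + (ℓ:ℤ) + 1 * (M:ℤ) = b + ℓ + M by ring] at hd
      omega
    have H23 : ∀ N M : ℕ, G.dist (g.toFun (a + ℓ + N)) (h.toFun (b - M)) = N + M + ℓ := by
      intro N M
      have hsep : ∀ j i : ℕ, j ≤ ℓ + N → i ≤ M →
          g.toFun (a + 1 * j) = h.toFun (b + (-1) * i) → j = 0 ∧ i = 0 := by
        intro j i _ _ hji
        obtain ⟨e1, e2, e3⟩ := CRAux.inter_t_pos g h a b ℓ hcap hor hji
        constructor <;> omega
      have hd := CRAux.dist_glue hT g h a b 1 (-1) (Or.inl rfl) (Or.inr rfl) hub (ℓ + N) M hsep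
      rw [show a + 1 * ((ℓ+N:ℕ):ℤ) = a + ℓ + N by push_cast; ring,
        show b + (-1) * (M:ℤ) = b - M by ring] at hd
      omega
    have H24 : ∀ N M : ℕ, G.dist (g.toFun (a + ℓ + N)) (h.toFun (b + ℓ + M)) = N + M + 0 := by
      intro N M
      have hsep : ∀ j i : ℕ, j ≤ N → i ≤ M →
          g.toFun (a + ℓ + 1 * j) = h.toFun (b + ℓ + 1 * i) → j = 0 ∧ i = 0 := by
        intro j i _ _ hji
        obtain ⟨e1, e2, e3⟩ := CRAux.inter_t_pos g h a b ℓ hcap hor hji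
        constructor <;> omega
      have hd := CRAux.dist_glue hT g h (a + ℓ) (b + ℓ) 1 1 (Or.inl rfl) (Or.inl rfl)
        hul N M hsep
      rw [show a + (ℓ:ℤ) + 1 * (N:ℤ) = a + ℓ + N by ring,
        show b + (ℓ:ℤ) + 1 * (M:ℤ) = b + ℓ + M by ring] at hd
      omega
    have hm := CRAux.master hT ξ₁ ξ₂ ξ₃ ξ₄ h13.symm h14.symm h23.symm h24.symm g h
      hg₁ hg₂ hh₃ hh₄ a b ℓ 0 ℓ ℓ 0 H13 H14 H23 H24
    rw [hm]
    congr 1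
    push_cast
    ring
  · intro hor
    have hub : g.toFun (a + (ℓ:ℤ)) = h.toFun b := by
      have h0 := hor ℓ le_rfl
      rw [show b + (ℓ:ℤ) - (ℓ:ℤ) = b by ring] at h0
      exact h0
    have hul : g.toFun a = h.toFun (b + (ℓ:ℤ)) := by
      have h0 := hor 0 (Nat.zero_le _)
      simpa using h0
    have H13 : ∀ N M : ℕ, G.dist (g.toFun (a - N)) (h.toFun (b - M)) = N + M + ℓ := by
      intro N M
      have hsep : ∀ j i : ℕ, j ≤ ℓ + N → i ≤ M →
          g.toFun (a + ℓ + (-1) * j) = h.toFun (b + (-1) * i) → j = 0 ∧ i = 0 := by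
        intro j i _ _ hji
        obtain ⟨e1, e2, e3⟩ := CRAux.inter_t_neg g h a b ℓ hcap hor hji
        constructor <;> omega
      have hd := CRAux.dist_glue hT g h (a + ℓ) b (-1) (-1) (Or.inr rfl) (Or.inr rfl)
        hub (ℓ + N) M hsep
      rw [show a + (ℓ:ℤ) + (-1) * ((ℓ+N:ℕ):ℤ) = a - N by push_cast; ring,
        show b + (-1) * (M:ℤ) = b - M by ring] at hd
      omega
    have H14 : ∀ N M : ℕ, G.dist (g.toFun (a - N)) (h.toFun (b + ℓ + M)) = N + M + 0 := by
      intro N M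
      have hsep : ∀ j i : ℕ, j ≤ N → i ≤ M →
          g.toFun (a + (-1) * j) = h.toFun (b + ℓ + 1 * i) → j = 0 ∧ i = 0 := by
        intro j i _ _ hji
        obtain ⟨e1, e2, e3⟩ := CRAux.inter_t_neg g h a b ℓ hcap hor hji
        constructor <;> omega
      have hd := CRAux.dist_glue hT g h a (b + ℓ) (-1) 1 (Or.inr rfl) (Or.inl rfl)
        hul N M hsep
      rw [show a + (-1) * (N:ℤ) = a - N by ring,
        show b + (ℓ:ℤ) + 1 * (M:ℤ) = b + ℓ + M by ring] at hd
      omega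
    have H23 : ∀ N M : ℕ, G.dist (g.toFun (a + ℓ + N)) (h.toFun (b - M)) = N + M + 0 := by
      intro N M
      have hsep : ∀ j i : ℕ, j ≤ N → i ≤ M →
          g.toFun (a + ℓ + 1 * j) = h.toFun (b + (-1) * i) → j = 0 ∧ i = 0 := by
        intro j i _ _ hji
        obtain ⟨e1, e2, e3⟩ := CRAux.inter_t_neg g h a b ℓ hcap hor hji
        constructor <;> omega
      have hd := CRAux.dist_glue hT g h (a + ℓ) b 1 (-1) (Or.inl rfl) (Or.inr rfl)
        hub N M hsep
      rw [show a + (ℓ:ℤ) + 1 * (N:ℤ) = a + ℓ + N by ring,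
        show b + (-1) * (M:ℤ) = b - M by ring] at hd
      omega
    have H24 : ∀ N M : ℕ, G.dist (g.toFun (a + ℓ + N)) (h.toFun (b + ℓ + M)) = N + M + ℓ := by
      intro N M
      have hsep : ∀ j i : ℕ, j ≤ ℓ + N → i ≤ M →
          g.toFun (a + 1 * j) = h.toFun (b + ℓ + 1 * i) → j = 0 ∧ i = 0 := by
        intro j i _ _ hji
        obtain ⟨e1, e2, e3⟩ := CRAux.inter_t_neg g h a b ℓ hcap hor hji
        constructor <;> omega
      have hd := CRAux.dist_glue hT g h a (b + ℓ) 1 1 (Or.inl rfl) (Or.inl rfl)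
        hul (ℓ + N) M hsep
      rw [show a + 1 * ((ℓ+N:ℕ):ℤ) = a + ℓ + N by push_cast; ring,
        show b + (ℓ:ℤ) + 1 * (M:ℤ) = b + ℓ + M by ring] at hd
      omega
    have hm := CRAux.master hT ξ₁ ξ₂ ξ₃ ξ₄ h13.symm h14.symm h23.symm h24.symm g h
      hg₁ hg₂ hh₃ hh₄ a b ℓ ℓ 0 0 ℓ H13 H14 H23 H24
    rw [hm]
    congr 1
    push_cast
    ring
end

section
/- Let T be a locally finite tree and γ an isometry of T with fixed base point x₀, and define j_γ(ξ) = e^{d(x₀,p) − d(p, γ^{-1}x₀)}, where p is the projection of the boundary point ξ onto the geodesic segment [x₀, γ^{-1}x₀]. Then j satisfies the multiplicative cocycle identity: j_{γδ}(ξ) = j_γ(δξ) · j_δ(ξ) for all isometries γ, δ and all ξ ∈ ∂T. -/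
open SimpleGraph

variable {V : Type*}

/-- An isometric automorphism of the graph `G` (a bijection preserving adjacency,
and hence the path metric). -/
structure GraphAut (G : SimpleGraph V) where
  toFun : V → V
  invFun : V → V
  left_inv : Function.LeftInverse invFun toFun
  right_inv : Function.RightInverse invFun toFun
  adj' : ∀ u v, G.Adj (toFun u) (toFun v) ↔ G.Adj u v
  dist' : ∀ u v, G.dist (toFun u) (toFun v) = G.dist u v

/-- The image of a geodesic ray under an isometric automorphism. -/
def TreeRay.map {G : SimpleGraph V} {x : V} (f : GraphAut G) (r : TreeRay G x) :
    TreeRay G (f.toFun x) where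
  toFun := f.toFun ∘ r.toFun
  init := by simp [r.init]
  adj := fun n => by simpa [f.adj'] using r.adj n
  isGeodesic := fun n => by
    have := r.isGeodesic n
    simpa [Function.comp, ← r.init, f.dist'] using this

/-- `p` is the projection of the boundary point `ξ` (a ray from `x₀`) onto the geodesic
segment `[x₀, y]`: the point of `[x₀, y]` lying on the ray toward `ξ` that is farthest
from `x₀` (the point where the ray `[x₀,ξ]` leaves `[x₀,y]`). -/
def IsProjOn {G : SimpleGraph V} {x₀ : V} (ξ : TreeRay G x₀) (y p : V) : Prop :=
  (G.dist x₀ p + G.dist p y = G.dist x₀ y) ∧ (∃ n, ξ.toFun n = p) ∧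
    ∀ q, (G.dist x₀ q + G.dist q y = G.dist x₀ y) → (∃ n, ξ.toFun n = q) →
      G.dist x₀ q ≤ G.dist x₀ p

/-- The local dilatation factor `e^{d(x₀,p) − d(p,y)}`, where `p` is the projection of a
boundary point onto `[x₀, y]` (for `y = γ⁻¹x₀` this is `j_γ(ξ)`). -/
noncomputable def jVal (G : SimpleGraph V) (x₀ y p : V) : ℝ :=
  Real.exp ((G.dist x₀ p : ℝ) - (G.dist p y : ℝ))


open SimpleGraph Walk

namespace JAux

variable {V : Type*} {G : SimpleGraph V}

lemma mem_support_dist_le {x u v : V} (P : G.Walk x u)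
    (hv : v ∈ P.support) : G.dist x v + G.dist v u ≤ P.length := by
  classical
  have h := P.take_spec hv
  have hlen : (P.takeUntil v hv).length + (P.dropUntil v hv).length = P.length := by
    rw [← Walk.length_append, h]
  calc G.dist x v + G.dist v u
      ≤ (P.takeUntil v hv).length + (P.dropUntil v hv).length :=
        add_le_add (dist_le _) (dist_le _)
    _ = P.length := hlen

lemma path_length_eq_dist (hT : G.IsTree) {x y : V} (p : G.Walk x y) (hp : p.IsPath) :
    p.length = G.dist x y := by
  obtain ⟨q, hq, hql⟩ := hT.isConnected.exists_path_of_dist x y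
  have h : (⟨p, hp⟩ : G.Path x y) = ⟨q, hq⟩ := hT.IsAcyclic.path_unique _ _
  rw [show p = q from congrArg Subtype.val h, hql]

lemma isPath_concat {x u v : V} {P : G.Walk x u} (hP : P.IsPath) (h : G.Adj u v)
    (hv : v ∉ P.support) : (P.concat h).IsPath := by
  rw [Walk.isPath_def, Walk.support_concat, List.nodup_append]
  refine ⟨hP.support_nodup, List.nodup_singleton v, ?_⟩
  intro a ha b hb hab
  simp only [List.mem_singleton] at hb
  subst hb
  exact hv (hab ▸ ha)

lemma adj_dist_ne (hT : G.IsTree) {x u v : V} (h : G.Adj u v) :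
    G.dist x u ≠ G.dist x v := by
  intro he
  obtain ⟨P, hP, hPl⟩ := hT.isConnected.exists_path_of_dist x u
  by_cases hv : v ∈ P.support
  · have h1 := mem_support_dist_le P hv
    have h2 : G.dist v u = 1 := by rw [dist_eq_one_iff_adj]; exact h.symm
    omega
  · have hQ : (P.concat h).IsPath := isPath_concat hP h hv
    have h3 : (P.concat h).length = G.dist x v := path_length_eq_dist hT _ hQ
    rw [Walk.length_concat, hPl] at h3
    omega

lemma dist_step (hT : G.IsTree) {y z : V} (p : G.Walk y z) {i : ℕ} (hi : i < p.length)
    (x : V) :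
    G.dist x (p.getVert (i + 1)) = G.dist x (p.getVert i) + 1 ∨
      G.dist x (p.getVert i) = G.dist x (p.getVert (i + 1)) + 1 := by
  have hadj := p.adj_getVert_succ hi
  have h1 : G.dist (p.getVert i) (p.getVert (i+1)) = 1 := by
    rw [dist_eq_one_iff_adj]; exact hadj
  have t1 := hT.isConnected.dist_triangle (u := x) (v := p.getVert i) (w := p.getVert (i+1))
  have t2 := hT.isConnected.dist_triangle (u := x) (v := p.getVert (i+1)) (w := p.getVert i)
  have h2 : G.dist (p.getVert (i+1)) (p.getVert i) = 1 := by
    rw [dist_comm]; exact h1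
  have hne := adj_dist_ne hT (x := x) hadj
  omega

lemma dist_getVert_start_le (p : G.Walk y z) (hT : G.IsTree) :
    ∀ i : ℕ, G.dist y (p.getVert i) ≤ i := by
  intro i
  induction i with
  | zero => simp [Walk.getVert_zero]
  | succ i ih =>
    by_cases hi : i < p.length
    · have hadj := p.adj_getVert_succ hi
      have h1 : G.dist (p.getVert i) (p.getVert (i+1)) = 1 := by
        rw [dist_eq_one_iff_adj]; exact hadj
      have := hT.isConnected.dist_triangle (u := y) (v := p.getVert i) (w := p.getVert (i+1))
      omega
    · push_neg at hi
      rw [p.getVert_of_length_le (by omega)]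
      rw [p.getVert_of_length_le hi] at ih
      omega

lemma dist_getVert_end_le (p : G.Walk y z) (hT : G.IsTree) :
    ∀ k : ℕ, G.dist (p.getVert (p.length - k)) z ≤ k := by
  intro k
  induction k with
  | zero => simp [Walk.getVert_length]
  | succ k ih =>
    by_cases hk : k < p.length
    · set i := p.length - (k + 1) with hidef
      have hi : i < p.length := by omega
      have hi1 : i + 1 = p.length - k := by omega
      have hadj := p.adj_getVert_succ hi
      have h1 : G.dist (p.getVert i) (p.getVert (i+1)) = 1 := by
        rw [dist_eq_one_iff_adj]; exact hadj
      have := hT.isConnected.dist_triangle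
        (u := p.getVert i) (v := p.getVert (i+1)) (w := z)
      rw [hi1] at this h1
      omega
    · push_neg at hk
      have h0 : p.length - (k+1) = 0 := by omega
      rw [h0, Walk.getVert_zero]
      have := dist_le p
      omega

lemma dist_getVert (hT : G.IsTree) {y z : V} (p : G.Walk y z) (hp : p.IsPath) {i : ℕ}
    (hi : i ≤ p.length) :
    G.dist y (p.getVert i) = i ∧ G.dist (p.getVert i) z = p.length - i := by
  have h1 := dist_getVert_start_le p hT i
  have h2 := dist_getVert_end_le p hT (p.length - i)
  rw [show p.length - (p.length - i) = i by omega] at h2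
  have h3 : p.length = G.dist y z := path_length_eq_dist hT p hp
  have h4 := hT.isConnected.dist_triangle (u := y) (v := p.getVert i) (w := z)
  omega

lemma no_local_max (hT : G.IsTree) {x y z : V} {p : G.Walk y z} (hp : p.IsPath) {i : ℕ}
    (hi : i + 2 ≤ p.length)
    (h1 : G.dist x (p.getVert (i+1)) = G.dist x (p.getVert i) + 1)
    (h2 : G.dist x (p.getVert (i+1)) = G.dist x (p.getVert (i+2)) + 1) : False := by
  classical
  have huv : G.Adj (p.getVert i) (p.getVert (i+1)) := p.adj_getVert_succ (by omega)
  have hvw : G.Adj (p.getVert (i+1)) (p.getVert (i+2)) := by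
    have := p.adj_getVert_succ (i := i + 1) (by omega)
    exact this
  set u := p.getVert i with hu
  set v := p.getVert (i+1) with hv
  set w := p.getVert (i+2) with hw
  have hune : u ≠ w := by
    intro he
    have d1 := (dist_getVert hT p hp (i := i) (by omega)).1
    have d2 := (dist_getVert hT p hp (i := i + 2) (by omega)).1
    rw [← hu] at d1
    rw [← hw] at d2
    rw [he, d2] at d1
    omega
  obtain ⟨P, hP, hPl⟩ := hT.isConnected.exists_path_of_dist x u
  obtain ⟨Q, hQ, hQl⟩ := hT.isConnected.exists_path_of_dist x w
  have hkw : G.dist x w = G.dist x u := by omega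
  have hvP : v ∉ P.support := by
    intro hmem
    have := mem_support_dist_le P hmem
    omega
  have hvQ : v ∉ Q.support := by
    intro hmem
    have := mem_support_dist_le Q hmem
    omega
  have hP1 : (P.concat huv).IsPath := isPath_concat hP huv hvP
  have hQ1 : (Q.concat hvw.symm).IsPath := isPath_concat hQ hvw.symm hvQ
  have heq : (⟨P.concat huv, hP1⟩ : G.Path x v) = ⟨Q.concat hvw.symm, hQ1⟩ :=
    hT.IsAcyclic.path_unique _ _
  have heqw : P.concat huv = Q.concat hvw.symm := congrArg Subtype.val heq
  have humem : u ∈ (P.concat huv).support := by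
    rw [Walk.support_concat]
    simp only [List.concat_eq_append, List.mem_append]
    exact Or.inl P.end_mem_support
  rw [heqw, Walk.support_concat, List.mem_append] at humem
  rcases humem with hmem | hmem
  · have := mem_support_dist_le Q hmem
    have hz : G.dist u w = 0 := by omega
    exact hune ((hT.isConnected.dist_eq_zero_iff (u := u) (v := w)).mp hz)
  · simp only [List.mem_singleton] at hmem
    exact huv.ne hmem

/-- once the distance function to `x` increases along a path, it keeps increasing -/
lemma incr_absorb (hT : G.IsTree) {x y z : V} {p : G.Walk y z} (hp : p.IsPath) {i : ℕ}
    (h : G.dist x (p.getVert (i+1)) = G.dist x (p.getVert i) + 1) :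
    ∀ j, i ≤ j → j < p.length →
      G.dist x (p.getVert (j+1)) = G.dist x (p.getVert j) + 1 := by
  intro j hij
  induction j, hij using Nat.le_induction with
  | base => intro _; exact h
  | succ j hij ih =>
    intro hj1
    have hj : j < p.length := by omega
    have hprev := ih hj
    rcases dist_step hT p (i := j + 1) hj1 x with hc | hc
    · exact hc
    · exact (no_local_max hT hp (i := j) (by omega) hprev hc).elim

lemma median (hT : G.IsTree) {y z : V} (x : V) (p : G.Walk y z) (hp : p.IsPath) :
    ∃ i, i ≤ p.length ∧ G.dist x y = G.dist x (p.getVert i) + i ∧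
      G.dist x z = G.dist x (p.getVert i) + (p.length - i) := by
  classical
  obtain ⟨i₀, hi₀mem, hi₀min⟩ := Finset.exists_min_image (Finset.range (p.length + 1))
    (fun i => G.dist x (p.getVert i)) ⟨0, by simp⟩
  rw [Finset.mem_range] at hi₀mem
  have hi₀ : i₀ ≤ p.length := by omega
  refine ⟨i₀, hi₀, ?_, ?_⟩
  · -- leftward: f (i₀ - k) = f i₀ + k
    have key : ∀ k, k ≤ i₀ →
        G.dist x (p.getVert (i₀ - k)) = G.dist x (p.getVert i₀) + k := by
      intro k
      induction k with
      | zero => simp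
      | succ k ih =>
        intro hk
        have ihk := ih (by omega)
        set j := i₀ - (k + 1) with hjdef
        have hj1 : j + 1 = i₀ - k := by omega
        have hjlt : j < p.length := by omega
        rcases dist_step hT p (i := j) hjlt x with hc | hc
        · -- increasing step before the minimum: contradiction
          exfalso
          have habs := incr_absorb hT hp (i := j) hc (i₀ - 1) (by omega) (by omega)
          rw [show i₀ - 1 + 1 = i₀ by omega] at habs
          have hmin := hi₀min (i₀ - 1) (by rw [Finset.mem_range]; omega)
          omega
        · rw [hj1, ihk] at hc
          omega
    have h0 := key i₀ le_rfl
    simpa using h0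
  · -- rightward: f (i₀ + k) = f i₀ + k
    have key : ∀ k, i₀ + k ≤ p.length →
        G.dist x (p.getVert (i₀ + k)) = G.dist x (p.getVert i₀) + k := by
      intro k
      induction k with
      | zero => simp
      | succ k ih =>
        intro hk
        have ihk := ih (by omega)
        have hjlt : i₀ + k < p.length := by omega
        rcases dist_step hT p (i := i₀ + k) hjlt x with hc | hc
        · rw [show i₀ + (k+1) = i₀ + k + 1 by omega]
          omega
        · -- decreasing step after the minimum: contradiction
          exfalso
          have hi₀lt : i₀ < p.length := by omega
          rcases dist_step hT p (i := i₀) hi₀lt x with hc0 | hc0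
          · have habs := incr_absorb hT hp (i := i₀) hc0 (i₀ + k) (by omega) hjlt
            omega
          · have hmin := hi₀min (i₀ + 1) (by rw [Finset.mem_range]; omega)
            omega
    have h0 := key (p.length - i₀) (by omega)
    rw [show i₀ + (p.length - i₀) = p.length by omega, Walk.getVert_length] at h0
    omega

end JAux
section RayPart
open SimpleGraph Walk

namespace JAux

variable {V : Type*} {G : SimpleGraph V}

/-- The initial segment of a ray, as a walk. -/
def rayWalk {x : V} (r : TreeRay G x) : (n : ℕ) → G.Walk x (r.toFun n)
  | 0 => Walk.nil.copy r.init rfl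
  | n + 1 => (rayWalk r n).concat (r.adj n)

@[simp] lemma rayWalk_length {x : V} (r : TreeRay G x) (n : ℕ) :
    (rayWalk r n).length = n := by
  induction n with
  | zero => simp [rayWalk]
  | succ n ih => simp [rayWalk, Walk.length_concat, ih]

lemma rayWalk_getVert {x : V} (r : TreeRay G x) (n : ℕ) :
    ∀ i, i ≤ n → (rayWalk r n).getVert i = r.toFun i := by
  induction n with
  | zero =>
    intro i hi
    interval_cases i
    simp [rayWalk, Walk.getVert_zero, r.init]
  | succ n ih =>
    intro i hi
    show ((rayWalk r n).append (Walk.cons (r.adj n) Walk.nil)).getVert i = r.toFun i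
    rw [Walk.getVert_append, rayWalk_length]
    by_cases hin : i < n
    · rw [if_pos hin]
      exact ih i (by omega)
    · rw [if_neg hin]
      rcases Nat.eq_or_lt_of_le hi with he | hlt
      · rw [he, show n + 1 - n = 1 from by omega]
        rfl
      · have : i = n := by omega
        subst this
        simp

lemma rayWalk_isPath {x : V} (r : TreeRay G x) (n : ℕ) : (rayWalk r n).IsPath :=
  Walk.isPath_of_length_eq_dist _ (by rw [rayWalk_length, r.isGeodesic n])

lemma ray_dist (hT : G.IsTree) {x : V} (r : TreeRay G x) {i j : ℕ} (hij : i ≤ j) :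
    G.dist (r.toFun i) (r.toFun j) = j - i := by
  have h := (dist_getVert hT (rayWalk r j) (rayWalk_isPath r j)
    (i := i) (by rw [rayWalk_length]; exact hij)).2
  rw [rayWalk_getVert r j i hij, rayWalk_length] at h
  exact h

lemma proj_dist (hT : G.IsTree) {x y p : V} {ξ : TreeRay G x} (h : IsProjOn ξ y p)
    {n : ℕ} (hn : G.dist x p ≤ n) :
    G.dist y (ξ.toFun n) + 2 * G.dist x p = G.dist x y + n := by
  obtain ⟨hseg, ⟨k, hk⟩, hmax⟩ := h
  have hkm : G.dist x p = k := by rw [← hk, ξ.isGeodesic k]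
  have hkn : k ≤ n := by omega
  -- upper bound
  have hdpn : G.dist p (ξ.toFun n) = n - G.dist x p := by
    subst hk
    rw [ray_dist hT ξ hkn, ξ.isGeodesic k]
  have htri := hT.isConnected.dist_triangle (u := y) (v := p) (w := ξ.toFun n)
  -- lower bound via the median
  obtain ⟨i, hi, hy, hz⟩ := median hT y (rayWalk ξ n) (rayWalk_isPath ξ n)
  rw [rayWalk_length] at hi hz
  rw [rayWalk_getVert ξ n i hi] at hy hz
  have hgi := ξ.isGeodesic i
  have hcomm1 : G.dist y x = G.dist x y := dist_comm ..
  have hcomm2 : G.dist y p = G.dist p y := dist_comm ..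
  have hcomm3 : G.dist (ξ.toFun i) y = G.dist y (ξ.toFun i) := dist_comm ..
  have hile : G.dist x (ξ.toFun i) ≤ G.dist x p := by
    apply hmax (ξ.toFun i) _ ⟨i, rfl⟩
    omega
  omega

end JAux
end RayPart
section MainPart
open SimpleGraph

/-- The multiplicative cocycle identity `j_{γδ}(ξ) = j_γ(δξ) · j_δ(ξ)`, where
`j_γ(ξ) = e^{d(x₀,p) − d(p,γ⁻¹x₀)}` with `p` the projection of `ξ` onto `[x₀,γ⁻¹x₀]`.
Here `η` is the ray from `x₀` representing the boundary point `δξ`, and `p₁, p₂, p₃`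
are the projections of `ξ` on `[x₀,(γδ)⁻¹x₀]`, of `δξ` on `[x₀,γ⁻¹x₀]`, and of `ξ` on
`[x₀,δ⁻¹x₀]` respectively. -/
theorem j_cocycle {V : Type*} (G : SimpleGraph V) (hT : G.IsTree) [G.LocallyFinite]
    (x₀ : V) (γ δ : GraphAut G) (ξ : TreeRay G x₀) (η : TreeRay G x₀)
    (hη : RayEquiv η (TreeRay.map δ ξ)) (p₁ p₂ p₃ : V)
    (h₁ : IsProjOn ξ (δ.invFun (γ.invFun x₀)) p₁)
    (h₂ : IsProjOn η (γ.invFun x₀) p₂)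
    (h₃ : IsProjOn ξ (δ.invFun x₀) p₃) :
    jVal G x₀ (δ.invFun (γ.invFun x₀)) p₁ =
      jVal G x₀ (γ.invFun x₀) p₂ * jVal G x₀ (δ.invFun x₀) p₃ := by
  obtain ⟨a, b, heq⟩ := hη
  set z1 := δ.invFun (γ.invFun x₀) with hz1
  set z2 := γ.invFun x₀ with hz2
  set z3 := δ.invFun x₀ with hz3
  set m1 := G.dist x₀ p₁ with hm1
  set m2 := G.dist x₀ p₂ with hm2
  set m3 := G.dist x₀ p₃ with hm3
  set N := m1 + m2 + m3 + a + b with hN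
  set M := m1 + m2 + m3 + a + a with hM
  have hMN : M = (N - b) + a := by omega
  have hδξ : η.toFun M = δ.toFun (ξ.toFun N) := by
    have h := heq (N - b)
    rw [show N - b + b = N from by omega] at h
    rw [hMN]
    exact h
  have F1 := JAux.proj_dist hT h₁ (n := N) (by omega)
  have F2 := JAux.proj_dist hT h₂ (n := M) (by omega)
  have F3 := JAux.proj_dist hT h₃ (n := N) (by omega)
  rw [hδξ] at F2
  have hδz3 : δ.toFun z3 = x₀ := δ.right_inv x₀
  have hδz1 : δ.toFun z1 = z2 := δ.right_inv (γ.invFun x₀)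
  have F4 : G.dist z3 (ξ.toFun N) = M := by
    have h := δ.dist' z3 (ξ.toFun N)
    rw [hδz3, ← hδξ] at h
    rw [← h, η.isGeodesic M]
  have F5 : G.dist z1 (ξ.toFun N) = G.dist z2 (δ.toFun (ξ.toFun N)) := by
    have h := δ.dist' z1 (ξ.toFun N)
    rw [hδz1] at h
    exact h.symm
  rw [F5] at F1
  have e1 := h₁.1
  have e2 := h₂.1
  have e3 := h₃.1
  have key : m1 + G.dist p₂ z2 + G.dist p₃ z3 = G.dist p₁ z1 + m2 + m3 := by omega
  unfold jVal
  rw [← Real.exp_add]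
  congr 1
  have : (m1 : ℝ) + G.dist p₂ z2 + G.dist p₃ z3 = G.dist p₁ z1 + m2 + m3 := by
    exact_mod_cast congrArg (Nat.cast : ℕ → ℝ) key
  linarith
end MainPart
end

section
/- Let T be a locally finite tree, x₀ a base vertex, and γ an isometry of T. Then for all distinct boundary points ξ, η one has ρ_{x₀}(γξ, γη) = (j_γ(ξ) j_γ(η))^{1/2} · ρ_{x₀}(ξ,η), where j_γ(ξ) = e^{d(x₀,p) − d(p,γ^{-1}x₀)} with p the projection of ξ on [x₀, γ^{-1}x₀]. -/
open SimpleGraph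

variable {V : Type*}

variable {G : SimpleGraph V}

/-- Walk along a function from `f 0` to `f n`. -/
def geoWalk (G : SimpleGraph V) (f : ℕ → V) :
    ∀ n : ℕ, (∀ k, k < n → G.Adj (f k) (f (k + 1))) → G.Walk (f 0) (f n)
  | 0, _ => SimpleGraph.Walk.nil
  | n + 1, h =>
      (geoWalk G f n fun k hk => h k (Nat.lt_succ_of_lt hk)).concat (h n (Nat.lt_succ_self n))

lemma geoWalk_length (f : ℕ → V) (n : ℕ) (h : ∀ k, k < n → G.Adj (f k) (f (k + 1))) :
    (geoWalk G f n h).length = n := by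
  induction n with
  | zero => rfl
  | succ n ih => simp [geoWalk, Walk.length_concat, ih]

lemma geoWalk_support (f : ℕ → V) (n : ℕ) (h : ∀ k, k < n → G.Adj (f k) (f (k + 1))) :
    (geoWalk G f n h).support = (List.range (n + 1)).map f := by
  induction n with
  | zero => simp [geoWalk, List.range_succ]
  | succ n ih =>
      rw [List.range_succ (n := n + 1), List.map_append]
      simp only [geoWalk, Walk.support_concat, ih]
      simp

lemma dist_getVert_le (hc : G.Connected) {u v : V} (w : G.Walk u v) (n : ℕ) :
    G.dist u (w.getVert n) ≤ n := by
  induction w generalizing n with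
  | nil =>
      rw [Walk.getVert_of_length_le _ (by simp : (Walk.nil : G.Walk _ _).length ≤ n)]
      simp [SimpleGraph.dist_self]
  | @cons a b c hab q ih =>
      cases n with
      | zero => simp
      | succ n =>
          rw [Walk.getVert_cons_succ]
          calc G.dist a (q.getVert n) ≤ G.dist a b + G.dist b (q.getVert n) :=
                hc.dist_triangle
            _ ≤ 1 + n := by
                have h1 : G.dist a b ≤ 1 := by
                  simpa using SimpleGraph.dist_le (Walk.cons hab Walk.nil)
                exact Nat.add_le_add h1 (ih n)
            _ = n + 1 := by omega

lemma dist_getVert_right_le (hc : G.Connected) {u v : V} (w : G.Walk u v) (n : ℕ) :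
    G.dist (w.getVert n) v ≤ w.length - n := by
  induction w generalizing n with
  | nil =>
      rw [Walk.getVert_of_length_le _ (by simp : (Walk.nil : G.Walk _ _).length ≤ n)]
      simp
  | @cons a b c hab q ih =>
      cases n with
      | zero =>
          simpa using SimpleGraph.dist_le (Walk.cons hab q)
      | succ n =>
          rw [Walk.getVert_cons_succ]
          simpa using ih n

/-- In a tree, every path realizes the distance. -/
lemma path_length_eq_dist (hT : G.IsTree) {u v : V} (w : G.Walk u v) (hw : w.IsPath) :
    w.length = G.dist u v := by
  obtain ⟨q, hq, hql⟩ := hT.isConnected.exists_path_of_dist u v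
  have : (⟨w, hw⟩ : G.Path u v) = ⟨q, hq⟩ := hT.IsAcyclic.path_unique _ _
  have hwq : w = q := congrArg Subtype.val this
  rw [hwq, hql]

/-- Two geodesic segments from the same point that meet at step `N` agree below `N`. -/
lemma geo_agree (hT : G.IsTree) {x : V} {f g : ℕ → V} {N : ℕ}
    (hf0 : f 0 = x) (hg0 : g 0 = x)
    (hfa : ∀ k, k < N → G.Adj (f k) (f (k + 1))) (hga : ∀ k, k < N → G.Adj (g k) (g (k + 1)))
    (hfd : ∀ k, k ≤ N → G.dist x (f k) = k) (hgd : ∀ k, k ≤ N → G.dist x (g k) = k)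
    (h : f N = g N) : ∀ k, k ≤ N → f k = g k := by
  set w1 : G.Walk x (f N) := (geoWalk G f N hfa).copy hf0 rfl with hw1
  set w2 : G.Walk x (f N) := (geoWalk G g N hga).copy hg0 h.symm with hw2
  have hp1 : w1.IsPath := by
    apply Walk.isPath_of_length_eq_dist
    rw [hw1, Walk.length_copy, geoWalk_length, hfd N le_rfl]
  have hp2 : w2.IsPath := by
    apply Walk.isPath_of_length_eq_dist
    rw [hw2, Walk.length_copy, geoWalk_length, hfd N le_rfl]
  have hEq : (⟨w1, hp1⟩ : G.Path x (f N)) = ⟨w2, hp2⟩ := hT.IsAcyclic.path_unique _ _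
  have hsup : w1.support = w2.support := congrArg (fun p : G.Path x (f N) => p.1.support) hEq
  rw [hw1, hw2, Walk.support_copy, Walk.support_copy, geoWalk_support, geoWalk_support,
    List.map_inj_left] at hsup
  intro k hk
  exact hsup k (by simp only [List.mem_range]; omega)

/-- The tripod lemma: two geodesic segments from `x` that branch at step `K`. -/
lemma geo_tripod (hT : G.IsTree) {x : V} {f g : ℕ → V} {K M N : ℕ}
    (hfa : ∀ k, k < M → G.Adj (f k) (f (k + 1))) (hga : ∀ k, k < N → G.Adj (g k) (g (k + 1)))
    (hfd : ∀ k, k ≤ M → G.dist x (f k) = k) (hgd : ∀ k, k ≤ N → G.dist x (g k) = k)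
    (hKM : K ≤ M) (hKN : K ≤ N) (hfg : f K = g K)
    (hdiv : ∀ i, K < i → i ≤ M → i ≤ N → f i ≠ g i) :
    G.dist (f M) (g N) + 2 * K = M + N := by
  set f' : ℕ → V := fun i => f (K + i) with hf'
  set g' : ℕ → V := fun j => g (K + j) with hg'
  have hfa' : ∀ k, k < M - K → G.Adj (f' k) (f' (k + 1)) := fun k hk => hfa (K + k) (by omega)
  have hga' : ∀ k, k < N - K → G.Adj (g' k) (g' (k + 1)) := fun k hk => hga (K + k) (by omega)
  set w1 : G.Walk (f K) (f M) :=
    ((geoWalk G f' (M - K) hfa').copy rfl (congrArg f (by omega))) with hw1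
  set w2 : G.Walk (g K) (g N) :=
    ((geoWalk G g' (N - K) hga').copy rfl (congrArg g (by omega))) with hw2
  set w : G.Walk (f M) (g N) := (w1.reverse.copy rfl hfg).append w2 with hw
  have hlen : w.length = (M - K) + (N - K) := by
    rw [hw, Walk.length_append, Walk.length_copy, Walk.length_reverse, hw1, hw2,
      Walk.length_copy, Walk.length_copy, geoWalk_length, geoWalk_length]
  have hsup : w.support =
      (((List.range (M - K + 1)).map f').reverse) ++
        ((List.range (N - K)).map (fun j => g' (j + 1))) := by
    rw [hw, Walk.support_append, Walk.support_copy, Walk.support_reverse, hw1, hw2,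
      Walk.support_copy, Walk.support_copy, geoWalk_support, geoWalk_support,
      List.range_succ_eq_map (n := N - K), List.map_cons, List.tail_cons, List.map_map]
    rfl
  have hinjf : ∀ i ∈ List.range (M - K + 1), ∀ j ∈ List.range (M - K + 1),
      f' i = f' j → i = j := by
    intro i hi j hj hij
    simp only [List.mem_range] at hi hj
    have h1 := hfd (K + i) (by omega)
    have h2 := hfd (K + j) (by omega)
    rw [hf'] at hij
    simp only at hij
    rw [hij] at h1
    omega
  have hP : w.IsPath := by
    rw [Walk.isPath_def, hsup]
    refine List.Nodup.append ?_ ?_ ?_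
    · rw [List.nodup_reverse]
      exact List.Nodup.map_on hinjf List.nodup_range
    · refine List.Nodup.map_on ?_ List.nodup_range
      intro i hi j hj hij
      simp only [List.mem_range] at hi hj
      have h1 := hgd (K + (i + 1)) (by omega)
      have h2 := hgd (K + (j + 1)) (by omega)
      rw [hg'] at hij
      simp only at hij
      rw [hij] at h1
      omega
    · rw [List.disjoint_left]
      intro a ha hb
      rw [List.mem_reverse, List.mem_map] at ha
      rw [List.mem_map] at hb
      obtain ⟨i, hi, rfl⟩ := ha
      obtain ⟨j, hj, hba⟩ := hb
      simp only [List.mem_range] at hi hj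
      have h1 := hfd (K + i) (by omega)
      have h2 := hgd (K + (j + 1)) (by omega)
      simp only [hf', hg'] at hba
      rw [hba] at h2
      have hij : K + i = K + (j + 1) := by omega
      exact hdiv (K + i) (by omega) (by omega) (by omega)
        (by rw [show K + i = K + (j+1) from by omega] at hba ⊢; exact hba.symm)
  have hdl := path_length_eq_dist hT w hP
  rw [hlen] at hdl
  omega

lemma TreeRay.ext' {V : Type*} {G : SimpleGraph V} {x : V} {r s : TreeRay G x}
    (h : r.toFun = s.toFun) : r = s := by
  cases r; cases s; simpa using h

lemma ray_overlap_spec {V : Type*} {G : SimpleGraph V} (hT : G.IsTree) {x : V}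
    (r s : TreeRay G x) (h : r ≠ s) :
    r.toFun (rayOverlap r s) = s.toFun (rayOverlap r s) ∧
      ∀ i, r.toFun i = s.toFun i → i ≤ rayOverlap r s := by
  obtain ⟨n₀, hn₀⟩ : ∃ n, r.toFun n ≠ s.toFun n := by
    by_contra hc
    push_neg at hc
    exact h (TreeRay.ext' (funext hc))
  have hbdd : ∀ i ∈ {n | r.toFun n = s.toFun n}, i ≤ n₀ := by
    intro i hi
    by_contra hlt
    push_neg at hlt
    exact hn₀ (geo_agree hT r.init s.init (fun k _ => r.adj k) (fun k _ => s.adj k)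
      (fun k _ => r.isGeodesic k) (fun k _ => s.isGeodesic k) hi n₀ (by omega))
  have hnem : {n | r.toFun n = s.toFun n}.Nonempty :=
    ⟨0, by simp only [Set.mem_setOf_eq, r.init, s.init]⟩
  have hb : BddAbove {n | r.toFun n = s.toFun n} := ⟨n₀, hbdd⟩
  constructor
  · exact Nat.sSup_mem hnem hb
  · intro i hi
    exact le_csSup hb hi

lemma ray_tripod {V : Type*} {G : SimpleGraph V} (hT : G.IsTree) {x : V}
    (r s : TreeRay G x) (h : r ≠ s) :
    ∀ m n, rayOverlap r s ≤ m → rayOverlap r s ≤ n →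
      G.dist (r.toFun m) (s.toFun n) + 2 * rayOverlap r s = m + n := by
  obtain ⟨hmem, hmax⟩ := ray_overlap_spec hT r s h
  intro m n hm hn
  exact geo_tripod hT (M := m) (N := n) (fun k _ => r.adj k) (fun k _ => s.adj k)
    (fun k _ => r.isGeodesic k) (fun k _ => s.isGeodesic k) hm hn hmem
    (fun i hi _ _ hEq => by have := hmax i hEq; omega)

/-- The conformality relation for the visual metric: for an isometry `γ` of a locally
finite tree and distinct boundary points `ξ, η`, one has
`ρ_{x₀}(γξ, γη) = (j_γ(ξ) j_γ(η))^{1/2} · ρ_{x₀}(ξ,η)`, where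
`j_γ(ξ) = e^{d(x₀,p) − d(p,γ⁻¹x₀)}` with `p` the projection of `ξ` on `[x₀, γ⁻¹x₀]`.
Here `ξ', η'` are the rays from `x₀` representing the boundary points `γξ, γη`. -/

theorem rho_conformal {V : Type*} (G : SimpleGraph V) (hT : G.IsTree) [G.LocallyFinite]
    (x₀ : V) (γ : GraphAut G) (ξ η : TreeRay G x₀) (hne : ξ ≠ η)
    (ξ' η' : TreeRay G x₀)
    (hξ' : RayEquiv ξ' (TreeRay.map γ ξ)) (hη' : RayEquiv η' (TreeRay.map γ η))
    (p q : V) (hp : IsProjOn ξ (γ.invFun x₀) p) (hq : IsProjOn η (γ.invFun x₀) q) :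
    rho ξ' η' =
      Real.sqrt (jVal G x₀ (γ.invFun x₀) p * jVal G x₀ (γ.invFun x₀) q) * rho ξ η := by
  classical
  set y := γ.invFun x₀ with hy
  set D := G.dist x₀ y with hD
  obtain ⟨hpgeo, ⟨a, hpa⟩, hpmax⟩ := hp
  obtain ⟨hqgeo, ⟨b, hqb⟩, hqmax⟩ := hq
  have hdxp : G.dist x₀ p = a := by rw [← hpa]; exact ξ.isGeodesic a
  have hdxq : G.dist x₀ q = b := by rw [← hqb]; exact η.isGeodesic b
  -- the geodesic segment from x₀ to y
  obtain ⟨w, hwPath, hwl⟩ := hT.isConnected.exists_path_of_dist x₀ y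
  set gfun : ℕ → V := fun n => w.getVert n with hgfun
  have hg0 : gfun 0 = x₀ := w.getVert_zero
  have hgD : gfun D = y := by
    rw [hgfun]
    simp only
    rw [hD, ← hwl]
    exact w.getVert_length
  have hgadj : ∀ k, k < D → G.Adj (gfun k) (gfun (k + 1)) := by
    intro k hk
    exact w.adj_getVert_succ (by omega)
  have hgdist1 : ∀ k, k ≤ D → G.dist x₀ (gfun k) = k := by
    intro k hk
    have le1 := dist_getVert_le hT.isConnected w k
    have le2 := dist_getVert_right_le hT.isConnected w k
    rw [hwl, ← hD] at le2
    have tri : G.dist x₀ y ≤ G.dist x₀ (w.getVert k) + G.dist (w.getVert k) y :=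
      hT.isConnected.dist_triangle
    simp only [hgfun]
    omega
  have hgdist2 : ∀ k, k ≤ D → G.dist (gfun k) y + k = D := by
    intro k hk
    have le1 := dist_getVert_le hT.isConnected w k
    have le2 := dist_getVert_right_le hT.isConnected w k
    rw [hwl, ← hD] at le2
    have tri : G.dist x₀ y ≤ G.dist x₀ (w.getVert k) + G.dist (w.getVert k) y :=
      hT.isConnected.dist_triangle
    simp only [hgfun]
    omega
  -- key fact: distance from points of a ray to y, beyond the projection
  have key : ∀ (r : TreeRay G x₀) (pt : V) (c : ℕ), r.toFun c = pt →
      (G.dist x₀ pt + G.dist pt y = D) →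
      (∀ z, G.dist x₀ z + G.dist z y = D → (∃ n, r.toFun n = z) →
        G.dist x₀ z ≤ G.dist x₀ pt) →
      ∀ m, c ≤ m → G.dist (r.toFun m) y + 2 * c = m + D := by
    intro r pt c hc hcgeo hcmax
    have hdxpt : G.dist x₀ pt = c := by rw [← hc]; exact r.isGeodesic c
    set S : Set ℕ := {n | n ≤ D ∧ r.toFun n = gfun n} with hS
    have hSne : S.Nonempty := ⟨0, by simp [hS, r.init, hg0]⟩
    have hSbdd : BddAbove S := ⟨D, fun i hi => hi.1⟩
    set K := sSup S with hK
    have hKmem : K ∈ S := Nat.sSup_mem hSne hSbdd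
    have hKmax : ∀ i ∈ S, i ≤ K := fun i hi => le_csSup hSbdd hi
    have hKD : K ≤ D := hKmem.1
    have hKc : K ≤ c := by
      have h1 := hgdist1 K hKD
      have h2 := hgdist2 K hKD
      have h3 := hcmax (gfun K) (by omega) ⟨K, hKmem.2⟩
      omega
    have tripod : ∀ m, K ≤ m → G.dist (r.toFun m) y + 2 * K = m + D := by
      intro m hm
      have := geo_tripod hT (f := r.toFun) (g := gfun) (K := K) (M := m) (N := D)
        (fun k _ => r.adj k) hgadj (fun k _ => r.isGeodesic k) hgdist1 hm hKD hKmem.2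
        (fun i hi1 _ hi3 hEq => by
          have : i ≤ K := hKmax i ⟨hi3, hEq⟩
          omega)
      rwa [hgD] at this
    have hKc' : K = c := by
      have h1 := tripod c hKc
      rw [hc] at h1
      omega
    intro m hm
    have := tripod m (by omega)
    omega
  have hPξ : ∀ m, a ≤ m → G.dist (ξ.toFun m) y + 2 * a = m + D :=
    key ξ p a hpa (by rw [hdxp] at hpgeo ⊢; exact hpgeo) hpmax
  have hPη : ∀ m, b ≤ m → G.dist (η.toFun m) y + 2 * b = m + D :=
    key η q b hqb (by rw [hdxq] at hqgeo ⊢; exact hqgeo) hqmax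
  -- shifts relating ξ' to γ ∘ ξ
  obtain ⟨a', b', hab'⟩ := hξ'
  obtain ⟨a'', b'', hab''⟩ := hη'
  have hmapval : ∀ (r : TreeRay G x₀) (k : ℕ),
      (TreeRay.map γ r).toFun k = γ.toFun (r.toFun k) := fun r k => rfl
  have hdistγ : ∀ z, G.dist x₀ (γ.toFun z) = G.dist y z := by
    intro z
    have h1 : γ.toFun y = x₀ := γ.right_inv x₀
    rw [← h1, γ.dist' y z]
  have hshiftξ : a' + 2 * a = b' + D := by
    have h1 := ξ'.isGeodesic (a + a')
    have h2 := hab' a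
    rw [h2, hmapval, hdistγ, SimpleGraph.dist_comm] at h1
    have h3 := hPξ (a + b') (by omega)
    omega
  have hshiftη : a'' + 2 * b = b'' + D := by
    have h1 := η'.isGeodesic (b + a'')
    have h2 := hab'' b
    rw [h2, hmapval, hdistγ, SimpleGraph.dist_comm] at h1
    have h3 := hPη (b + b'') (by omega)
    omega
  -- the image rays are distinct
  have hne0 : ∃ n, ξ.toFun n ≠ η.toFun n := by
    by_contra hc
    push_neg at hc
    exact hne (TreeRay.ext' (funext hc))
  have hne' : ξ' ≠ η' := by
    intro hEq
    obtain ⟨n₀, hn₀⟩ := hne0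
    have e1 := hab' (a'' + n₀)
    have e2 := hab'' (a' + n₀)
    rw [hEq] at e1
    have e3 : γ.toFun (ξ.toFun (a'' + n₀ + b')) = γ.toFun (η.toFun (a' + n₀ + b'')) := by
      rw [← hmapval, ← hmapval, ← e1, ← e2]
      congr 1
      omega
    have h4 : ξ.toFun (a'' + n₀ + b') = η.toFun (a' + n₀ + b'') := by
      have := congrArg γ.invFun e3
      rwa [γ.left_inv _, γ.left_inv _] at this
    have hidx : a'' + n₀ + b' = a' + n₀ + b'' := by
      have d1 := ξ.isGeodesic (a'' + n₀ + b')
      have d2 := η.isGeodesic (a' + n₀ + b'')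
      rw [h4] at d1
      omega
    rw [hidx] at h4
    exact hn₀ (geo_agree hT ξ.init η.init (fun k _ => ξ.adj k) (fun k _ => η.adj k)
      (fun k _ => ξ.isGeodesic k) (fun k _ => η.isGeodesic k) h4 n₀ (by omega))
  -- the main overlap identity
  set L := rayOverlap ξ η with hL
  set L' := rayOverlap ξ' η' with hL'
  have hKey : L' + a + b = L + D := by
    set t := L + L' with ht
    have e1 := hab' (a'' + t)
    have e2 := hab'' (a' + t)
    have d1 := ray_tripod hT ξ' η' hne' (a'' + t + a') (a' + t + a'') (by omega) (by omega)
    rw [e1, e2, hmapval, hmapval, γ.dist'] at d1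
    have d2 := ray_tripod hT ξ η hne (a'' + t + b') (a' + t + b'') (by omega) (by omega)
    omega
  -- conclude
  have hρ' : rho ξ' η' = Real.exp (-(L' : ℝ)) := by
    rw [rho]
    exact if_neg hne'
  have hρ : rho ξ η = Real.exp (-(L : ℝ)) := by
    rw [rho]
    exact if_neg hne
  have c1 : (G.dist x₀ p : ℝ) = a := by exact_mod_cast hdxp
  have c2 : (G.dist p y : ℝ) + a = D := by
    have : G.dist p y + a = D := by omega
    exact_mod_cast this
  have c3 : (G.dist x₀ q : ℝ) = b := by exact_mod_cast hdxq
  have c4 : (G.dist q y : ℝ) + b = D := by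
    have : G.dist q y + b = D := by omega
    exact_mod_cast this
  have c5 : (L' : ℝ) + a + b = L + D := by exact_mod_cast hKey
  rw [hρ', hρ, jVal, jVal, ← Real.exp_add, ← Real.exp_half, ← Real.exp_add]
  congr 1
  linarith
end

section
/- Let T₁, T₂ be locally finite trees without ends, and let F: ∂T₁ → ∂T₂ be a bijection of their boundaries that preserves the cross-ratio of every four pairwise distinct boundary points. Then there exists a bijective isometry between T₁ and T₂ inducing F on the boundaries. -/
open SimpleGraph

variable {V : Type*}

/-- A bijective isometry between the graphs `G` and `H` (preserving adjacency and
hence the path metric). -/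
structure GraphIsomBet {W : Type*} (G : SimpleGraph V) (H : SimpleGraph W) where
  toFun : V → W
  bij : Function.Bijective toFun
  adj' : ∀ u v, H.Adj (toFun u) (toFun v) ↔ G.Adj u v
  dist' : ∀ u v, H.dist (toFun u) (toFun v) = G.dist u v

/-- The image of a geodesic ray under a bijective isometry of graphs. -/
def GraphIsomBet.mapRay {W : Type*} {G : SimpleGraph V} {H : SimpleGraph W}
    (f : GraphIsomBet G H) {x : V} (r : TreeRay G x) : TreeRay H (f.toFun x) where
  toFun := f.toFun ∘ r.toFun
  init := by simp [r.init]
  adj := fun n => by simpa [f.adj'] using r.adj n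
  isGeodesic := fun n => by
    have := r.isGeodesic n
    simpa [Function.comp, ← r.init, f.dist'] using this


namespace CRT

variable {V : Type*} {G : SimpleGraph V}

lemma isPath_length_eq_dist (hG : G.IsTree) {a b : V} (p : G.Walk a b) (hp : p.IsPath) :
    p.length = G.dist a b := by
  classical
  obtain ⟨q, hq⟩ := hG.isConnected.exists_walk_length_eq_dist a b
  have hbp : q.bypass.IsPath := q.bypass_isPath
  have h1 : q.bypass.length ≤ G.dist a b := hq ▸ q.length_bypass_le
  have h2 : G.dist a b ≤ q.bypass.length := SimpleGraph.dist_le _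
  obtain ⟨r, -, hr⟩ := hG.existsUnique_path a b
  have e1 : p = q.bypass := (hr p hp).trans (hr q.bypass hbp).symm
  have := e1 ▸ (le_antisymm h1 h2)
  omega

variable {x : V}

lemma ray_eq_index {r s : TreeRay G x} {i j : ℕ} (h : r.toFun i = s.toFun j) : i = j := by
  have h1 := r.isGeodesic i
  have h2 := s.isGeodesic j
  rw [h] at h1; omega

def raySeg (r : TreeRay G x) (m : ℕ) : (k : ℕ) → G.Walk (r.toFun m) (r.toFun (m + k))
  | 0 => Walk.nil
  | (k+1) => (raySeg r m k).concat (r.adj (m+k))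

@[simp] lemma raySeg_length (r : TreeRay G x) (m k : ℕ) : (raySeg r m k).length = k := by
  induction k with
  | zero => rfl
  | succ k ih => simp [raySeg, ih]

lemma raySeg_support (r : TreeRay G x) (m k : ℕ) :
    (raySeg r m k).support = (List.range (k+1)).map (fun i => r.toFun (m+i)) := by
  induction k with
  | zero => simp [raySeg, List.range_succ]
  | succ k ih =>
    simp only [raySeg, Walk.support_concat, ih, List.concat_eq_append, List.range_succ (n := k+1)]
    simp

lemma raySeg_isPath (r : TreeRay G x) (m k : ℕ) : (raySeg r m k).IsPath := by
  rw [Walk.isPath_def, raySeg_support]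
  refine List.Nodup.map ?_ (List.nodup_range)
  intro i j hij
  have := ray_eq_index (r := r) (s := r) hij
  omega

lemma ray_dist (hG : G.IsTree) (r : TreeRay G x) (m k : ℕ) :
    G.dist (r.toFun m) (r.toFun (m+k)) = k := by
  have := isPath_length_eq_dist hG (raySeg r m k) (raySeg_isPath r m k)
  simpa using this.symm

lemma dist_ray_same (hG : G.IsTree) (r : TreeRay G x) (m n : ℕ) :
    G.dist (r.toFun m) (r.toFun n) + 2 * min m n = m + n := by
  rcases le_total m n with h | h
  · have := ray_dist hG r m (n - m)
    rw [show m + (n - m) = n by omega] at this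
    omega
  · have := ray_dist hG r n (m - n)
    rw [show n + (m - n) = m by omega, SimpleGraph.dist_comm] at this
    omega

lemma agree_of_agree_ge (hG : G.IsTree) {r s : TreeRay G x} {n : ℕ}
    (h : r.toFun n = s.toFun n) {m : ℕ} (hm : m ≤ n) : r.toFun m = s.toFun m := by
  have hrx : r.toFun 0 = s.toFun 0 := by rw [r.init, s.init]
  set p : G.Walk (r.toFun 0) (r.toFun n) := (raySeg r 0 n).copy (by simp) (by simp)
  set q : G.Walk (r.toFun 0) (r.toFun n) := (raySeg s 0 n).copy hrx.symm (by simp [h])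
  have hp : p.IsPath := (Walk.isPath_copy _ _ _).mpr (raySeg_isPath r 0 n)
  have hq : q.IsPath := (Walk.isPath_copy _ _ _).mpr (raySeg_isPath s 0 n)
  obtain ⟨w, -, hw⟩ := hG.existsUnique_path (r.toFun 0) (r.toFun n)
  have e : p = q := (hw p hp).trans (hw q hq).symm
  have hsup : p.support = q.support := by rw [e]
  rw [show p.support = (List.range (n+1)).map (fun i => r.toFun i) by
        simp [p, Walk.support_copy, raySeg_support],
      show q.support = (List.range (n+1)).map (fun i => s.toFun i) by
        simp [q, Walk.support_copy, raySeg_support]] at hsup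
  have hm' : m < n + 1 := by omega
  have := congrArg (fun l => l.getD m x) hsup
  simpa [List.getD_eq_getElem, hm'] using this

lemma TreeRay.ext' {r s : TreeRay G x} (h : r.toFun = s.toFun) : r = s := by
  cases r with
  | mk f hf ha hg =>
    cases s with
    | mk f' hf' ha' hg' =>
      dsimp at h
      subst h
      rfl


lemma overlap_comm (r s : TreeRay G x) : rayOverlap r s = rayOverlap s r := by
  unfold rayOverlap
  congr 1
  ext n
  exact eq_comm

lemma overlap_spec (hG : G.IsTree) {r s : TreeRay G x} (hne : r ≠ s) :
    (∀ n : ℕ, r.toFun n = s.toFun n ↔ n ≤ rayOverlap r s) ∧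
      r.toFun (rayOverlap r s + 1) ≠ s.toFun (rayOverlap r s + 1) := by
  set S : Set ℕ := {n | r.toFun n = s.toFun n} with hS
  have h0 : 0 ∈ S := by simp [hS, r.init, s.init]
  obtain ⟨N, hN⟩ : ∃ N, N ∉ S := by
    by_contra hc
    push_neg at hc
    exact hne (TreeRay.ext' (funext fun n => hc n))
  have hub : ∀ n ∈ S, n ≤ N := by
    intro n hn
    by_contra hlt
    exact hN (agree_of_agree_ge hG hn (by omega))
  have hbdd : BddAbove S := ⟨N, hub⟩
  have hmem : sSup S ∈ S := Nat.sSup_mem ⟨0, h0⟩ hbdd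
  have hO : rayOverlap r s = sSup S := rfl
  refine ⟨fun n => ⟨fun h => ?_, fun h => ?_⟩, fun h => ?_⟩
  · exact hO ▸ le_csSup hbdd h
  · exact agree_of_agree_ge hG hmem (hO ▸ h)
  · have : (sSup S + 1) ≤ sSup S := le_csSup hbdd (h : _ ∈ S)
    omega

lemma agree_iff_le_overlap (hG : G.IsTree) {r s : TreeRay G x} (hne : r ≠ s) (n : ℕ) :
    r.toFun n = s.toFun n ↔ n ≤ rayOverlap r s := (overlap_spec hG hne).1 n

lemma overlap_succ_ne (hG : G.IsTree) {r s : TreeRay G x} (hne : r ≠ s) :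
    r.toFun (rayOverlap r s + 1) ≠ s.toFun (rayOverlap r s + 1) := (overlap_spec hG hne).2

lemma overlap_eq_of (hG : G.IsTree) {r s : TreeRay G x} {N : ℕ}
    (h1 : r.toFun N = s.toFun N) (h2 : r.toFun (N+1) ≠ s.toFun (N+1)) :
    rayOverlap r s = N := by
  have hne : r ≠ s := fun h => h2 (by rw [h])
  have hs := overlap_spec hG hne
  have hle : N ≤ rayOverlap r s := (hs.1 N).mp h1
  rcases Nat.lt_or_ge (rayOverlap r s) (N+1) with h | h
  · omega
  · exact absurd ((hs.1 (N+1)).mpr h) h2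

lemma overlap_ultra (hG : G.IsTree) {a b c : TreeRay G x} (hab : a ≠ b) (hbc : b ≠ c)
    (hac : a ≠ c) : min (rayOverlap a b) (rayOverlap b c) ≤ rayOverlap a c := by
  set m := min (rayOverlap a b) (rayOverlap b c) with hm
  have h1 : a.toFun m = b.toFun m := (agree_iff_le_overlap hG hab m).mpr (by omega)
  have h2 : b.toFun m = c.toFun m := (agree_iff_le_overlap hG hbc m).mpr (by omega)
  exact (agree_iff_le_overlap hG hac m).mp (h1.trans h2)

lemma dist_ray_ray (hG : G.IsTree) {r s : TreeRay G x} (hne : r ≠ s) (m n : ℕ) :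
    G.dist (r.toFun m) (s.toFun n) + 2 * min (rayOverlap r s) (min m n) = m + n := by
  set k := rayOverlap r s with hk
  rcases le_or_gt (min m n) k with h | h
  · rcases le_total m n with hmn | hmn
    · have hm : m ≤ k := by omega
      have hag : r.toFun m = s.toFun m := (agree_iff_le_overlap hG hne m).mpr hm
      have := dist_ray_same hG s m n
      rw [hag]
      omega
    · have hn : n ≤ k := by omega
      have hag : r.toFun n = s.toFun n := (agree_iff_le_overlap hG hne n).mpr hn
      have := dist_ray_same hG r m n
      rw [← hag]
      omega
  · -- k < m and k < n : build the concatenated path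
    have hkm : k < m := by omega
    have hkn : k < n := by omega
    have hag : r.toFun k = s.toFun k := (agree_iff_le_overlap hG hne k).mpr le_rfl
    set W1 : G.Walk (r.toFun k) (r.toFun m) :=
      (raySeg r k (m-k)).copy rfl (congrArg r.toFun (by omega)) with hW1
    set W2 : G.Walk (r.toFun k) (s.toFun n) :=
      (raySeg s k (n-k)).copy hag.symm (congrArg s.toFun (by omega)) with hW2
    set w : G.Walk (r.toFun m) (s.toFun n) := W1.reverse.append W2 with hw
    have hlen : w.length = (m - k) + (n - k) := by
      simp [hw, hW1, hW2]
    have hsup1 : W1.support = (List.range (m-k+1)).map (fun i => r.toFun (k+i)) := by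
      simp [hW1, Walk.support_copy, raySeg_support]
    have hsup2 : W2.support = (List.range (n-k+1)).map (fun i => s.toFun (k+i)) := by
      simp [hW2, Walk.support_copy, raySeg_support]
    have htail : W2.support.tail = (List.range (n-k)).map (fun i => s.toFun (k + (i+1))) := by
      rw [hsup2, List.range_succ_eq_map]
      simp [List.map_map, Function.comp]
    have hpath : w.IsPath := by
      rw [Walk.isPath_def, hw, Walk.support_append, Walk.support_reverse]
      refine List.Nodup.append ?_ ?_ ?_
      · rw [hsup1, List.nodup_reverse]
        exact List.Nodup.map
          (fun i j hij => by have := ray_eq_index (r := r) (s := r) hij; omega)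
          (List.nodup_range)
      · rw [htail]
        exact List.Nodup.map
          (fun i j hij => by have := ray_eq_index (r := s) (s := s) hij; omega)
          (List.nodup_range)
      · -- disjointness
        intro a ha hb
        rw [List.mem_reverse, hsup1, List.mem_map] at ha
        obtain ⟨i, hi, hia⟩ := ha
        rw [List.mem_range] at hi
        rw [htail, List.mem_map] at hb
        obtain ⟨j, hj, hja⟩ := hb
        rw [List.mem_range] at hj
        rw [← hia] at hja
        have hij : k + (j+1) = k + i := ray_eq_index hja
        have hsr : s.toFun (k+(j+1)) = r.toFun (k+(j+1)) := by rw [hja, hij]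
        have hle := (agree_iff_le_overlap hG hne (k+(j+1))).mp hsr.symm
        omega
    have := isPath_length_eq_dist hG w hpath
    rw [hlen] at this
    have hmin : min k (min m n) = k := by omega
    rw [hmin, ← this]
    omega


lemma exists_geodesic_path (hG : G.IsTree) (a b : V) :
    ∃ p : G.Walk a b, p.IsPath ∧ p.length = G.dist a b := by
  classical
  obtain ⟨q, hq⟩ := hG.isConnected.exists_walk_length_eq_dist a b
  refine ⟨q.bypass, q.bypass_isPath, le_antisymm ?_ (SimpleGraph.dist_le _)⟩
  exact hq ▸ q.length_bypass_le

lemma walk_getVert_dist_le (hG : G.IsTree) {a b : V} (p : G.Walk a b) (k : ℕ) :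
    G.dist a (p.getVert k) ≤ k := by
  induction p generalizing k with
  | nil => simp [Walk.getVert, SimpleGraph.dist_self]
  | cons h q ih =>
    cases k with
    | zero => simp [Walk.getVert_zero]
    | succ k =>
      rw [Walk.getVert_cons_succ]
      calc G.dist _ _ ≤ G.dist _ _ + G.dist _ _ := hG.isConnected.dist_triangle
        _ ≤ 1 + k := by
            gcongr
            · exact SimpleGraph.dist_le (Walk.cons h Walk.nil)
            · exact ih k
        _ = k + 1 := by omega

lemma walk_getVert_dist_end_le (hG : G.IsTree) {a b : V} (p : G.Walk a b) (k : ℕ) :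
    G.dist (p.getVert k) b ≤ p.length - k := by
  induction p generalizing k with
  | nil => simp [Walk.getVert]
  | cons h q ih =>
    cases k with
    | zero =>
      rw [Walk.getVert_zero]
      have := SimpleGraph.dist_le (Walk.cons h q)
      simpa using this
    | succ k =>
      rw [Walk.getVert_cons_succ]
      have := ih k
      simpa [Walk.length_cons] using this

lemma geodesic_getVert_dist (hG : G.IsTree) {a b : V} {p : G.Walk a b}
    (hlen : p.length = G.dist a b) {k : ℕ} (hk : k ≤ p.length) :
    G.dist a (p.getVert k) = k := by
  have h1 := walk_getVert_dist_le hG p k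
  have h2 := walk_getVert_dist_end_le hG p k
  have h3 : G.dist a b ≤ G.dist a (p.getVert k) + G.dist (p.getVert k) b :=
    hG.isConnected.dist_triangle
  omega

lemma concat_isPath {a u v : V} {p : G.Walk a u} (hp : p.IsPath) (h : G.Adj u v)
    (hv : v ∉ p.support) : (p.concat h).IsPath := by
  rw [Walk.isPath_def, Walk.support_concat]
  rw [Walk.isPath_def] at hp
  simp [List.concat_eq_append, List.nodup_append, hp, hv]
  exact fun b hb hbv => hv (hbv ▸ hb)

lemma adj_dist_step (hG : G.IsTree) (x : V) {u v : V} (h : G.Adj u v) :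
    G.dist x v = G.dist x u + 1 ∨ G.dist x u = G.dist x v + 1 := by
  classical
  obtain ⟨p, hp, hlen⟩ := exists_geodesic_path hG x u
  by_cases hv : v ∈ p.support
  · right
    have hq : (p.takeUntil v hv).IsPath := hp.takeUntil hv
    have hd : (p.dropUntil v hv).IsPath := hp.dropUntil hv
    have hqd : (p.takeUntil v hv).length + (p.dropUntil v hv).length = p.length := by
      conv_rhs => rw [← p.take_spec hv]
      rw [Walk.length_append]
    have h1 : (p.takeUntil v hv).length = G.dist x v := isPath_length_eq_dist hG _ hq
    have h2 : (p.dropUntil v hv).length = G.dist v u := isPath_length_eq_dist hG _ hd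
    have h3 : G.dist v u = 1 := SimpleGraph.dist_eq_one_iff_adj.mpr h.symm
    omega
  · left
    have := isPath_length_eq_dist hG (p.concat h) (concat_isPath hp h hv)
    rw [Walk.length_concat, hlen] at this
    omega

lemma pred_unique (hG : G.IsTree) {x v u₁ u₂ : V} (h1 : G.Adj u₁ v) (h2 : G.Adj u₂ v)
    (d1 : G.dist x u₁ + 1 = G.dist x v) (d2 : G.dist x u₂ + 1 = G.dist x v) : u₁ = u₂ := by
  classical
  obtain ⟨p₁, hp₁, hl₁⟩ := exists_geodesic_path hG x u₁
  obtain ⟨p₂, hp₂, hl₂⟩ := exists_geodesic_path hG x u₂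
  have hv₁ : v ∉ p₁.support := by
    intro hv
    have := isPath_length_eq_dist hG _ (hp₁.takeUntil hv)
    have hle := Walk.length_takeUntil_le p₁ hv
    omega
  have hv₂ : v ∉ p₂.support := by
    intro hv
    have := isPath_length_eq_dist hG _ (hp₂.takeUntil hv)
    have hle := Walk.length_takeUntil_le p₂ hv
    omega
  obtain ⟨w, -, hw⟩ := hG.existsUnique_path x v
  have e : p₁.concat h1 = p₂.concat h2 :=
    (hw _ (concat_isPath hp₁ h1 hv₁)).trans (hw _ (concat_isPath hp₂ h2 hv₂)).symm
  have e' := congrArg Walk.reverse e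
  rw [Walk.reverse_concat, Walk.reverse_concat] at e'
  have := congrArg (fun q => q.getVert 1) e'
  simpa [Walk.getVert_cons_succ, Walk.getVert_zero] using this

lemma exists_succ (hG : G.IsTree) [G.LocallyFinite] (hdeg : ∀ v, 2 ≤ G.degree v)
    (x v : V) : ∃ v', G.Adj v v' ∧ G.dist x v' = G.dist x v + 1 := by
  classical
  by_contra hc
  push_neg at hc
  have hcard : 1 < (G.neighborFinset v).card := by
    have := hdeg v
    rw [← G.card_neighborFinset_eq_degree] at this
    omega
  obtain ⟨u₁, hu₁, u₂, hu₂, hne⟩ := Finset.one_lt_card.mp hcard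
  rw [SimpleGraph.mem_neighborFinset] at hu₁ hu₂
  have key : ∀ u, G.Adj v u → G.dist x u + 1 = G.dist x v := by
    intro u hu
    rcases adj_dist_step hG x hu with h | h
    · exact absurd h (hc u hu)
    · omega
  exact hne (pred_unique hG hu₁.symm hu₂.symm (key u₁ hu₁) (key u₂ hu₂))

lemma exists_ray_through (hG : G.IsTree) [G.LocallyFinite] (hdeg : ∀ v, 2 ≤ G.degree v)
    (x v : V) : ∃ r : TreeRay G x, r.toFun (G.dist x v) = v := by
  classical
  obtain ⟨p, hp, hlen⟩ := exists_geodesic_path hG x v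
  set n := p.length with hn
  have hsucc : ∀ w : V, ∃ w', G.Adj w w' ∧ G.dist x w' = G.dist x w + 1 :=
    fun w => exists_succ hG hdeg x w
  set succFn : V → V := fun w => (hsucc w).choose with hsF
  have hsFspec : ∀ w, G.Adj w (succFn w) ∧ G.dist x (succFn w) = G.dist x w + 1 :=
    fun w => (hsucc w).choose_spec
  set e : ℕ → V := fun k => Nat.rec (p.getVert 0) (fun k ih => if k + 1 ≤ n then p.getVert (k+1) else succFn ih) k with he
  have he0 : e 0 = x := by simp [he, Walk.getVert_zero]
  have hestep : ∀ k, e (k+1) = if k + 1 ≤ n then p.getVert (k+1) else succFn (e k) :=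
    fun k => rfl
  have claim : ∀ k, (k ≤ n → e k = p.getVert k) ∧ G.dist x (e k) = k := by
    intro k
    induction k with
    | zero => exact ⟨fun _ => rfl, by rw [he0]; simp⟩
    | succ k ih =>
      by_cases h : k + 1 ≤ n
      · refine ⟨fun _ => by rw [hestep, if_pos h], ?_⟩
        rw [hestep, if_pos h]
        exact geodesic_getVert_dist hG hlen (by omega)
      · refine ⟨fun hh => absurd hh h, ?_⟩
        rw [hestep, if_neg h, (hsFspec (e k)).2, ih.2]
  have hadj : ∀ k, G.Adj (e k) (e (k+1)) := by
    intro k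
    by_cases h : k + 1 ≤ n
    · rw [hestep, if_pos h, (claim k).1 (by omega)]
      exact p.adj_getVert_succ (by omega)
    · rw [hestep, if_neg h]
      exact (hsFspec (e k)).1
  refine ⟨⟨e, he0, hadj, fun k => (claim k).2⟩, ?_⟩
  have hd : G.dist x v = n := hlen.symm
  rw [hd]
  show e n = v
  rw [(claim n).1 le_rfl, hn, Walk.getVert_length]


section BaseChange

variable {z : V}

noncomputable def uFn (η₀ : TreeRay G z) (d : ℕ) (s : TreeRay G z) : ℕ :=
  letI := Classical.dec (s = η₀)
  if s = η₀ then d else min (rayOverlap η₀ s) d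

lemma uFn_eta (η₀ : TreeRay G z) (d : ℕ) : uFn η₀ d η₀ = d := by
  unfold uFn; simp

lemma uFn_ne (η₀ : TreeRay G z) (d : ℕ) {s : TreeRay G z} (h : s ≠ η₀) :
    uFn η₀ d s = min (rayOverlap η₀ s) d := by
  unfold uFn; simp [h]

lemma uFn_le (η₀ : TreeRay G z) (d : ℕ) (s : TreeRay G z) : uFn η₀ d s ≤ d := by
  by_cases h : s = η₀
  · rw [h, uFn_eta]
  · rw [uFn_ne η₀ d h]; exact min_le_right _ _

lemma uFn_agree (hG : G.IsTree) (η₀ : TreeRay G z) (d : ℕ) (s : TreeRay G z) {i : ℕ}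
    (hi : i ≤ uFn η₀ d s) : s.toFun i = η₀.toFun i := by
  by_cases h : s = η₀
  · rw [h]
  · rw [uFn_ne η₀ d h] at hi
    exact ((agree_iff_le_overlap hG (fun hh => h hh.symm) i).mpr (by omega)).symm

noncomputable def Rmap (hG : G.IsTree) (η₀ : TreeRay G z) (d : ℕ) (s : TreeRay G z) :
    TreeRay G (η₀.toFun d) where
  toFun m :=
    if m ≤ d - uFn η₀ d s then η₀.toFun (uFn η₀ d s + ((d - uFn η₀ d s) - m))
    else s.toFun (uFn η₀ d s + (m - (d - uFn η₀ d s)))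
  init := by
    have hu := uFn_le η₀ d s
    rw [if_pos (by omega)]
    exact congrArg η₀.toFun (by omega)
  adj := by
    intro m
    set u := uFn η₀ d s with hudef
    have hu := uFn_le η₀ d s
    set a := d - u with ha
    by_cases h1 : m + 1 ≤ a
    · rw [if_pos (by omega : m ≤ a), if_pos h1]
      have : u + (a - m) = (u + (a - (m+1))) + 1 := by omega
      rw [this]
      exact (η₀.adj _).symm
    · by_cases h2 : m ≤ a
      · -- m = a
        have hm : m = a := by omega
        rw [if_pos h2, if_neg h1]
        have e1 : η₀.toFun (u + (a - m)) = s.toFun u := by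
          rw [hm]
          simp only [Nat.sub_self, Nat.add_zero]
          exact (uFn_agree hG η₀ d s le_rfl).symm
        have e2 : u + (m + 1 - a) = u + 1 := by omega
        rw [e1, e2]
        exact s.adj u
      · rw [if_neg h2, if_neg h1]
        have : u + (m + 1 - a) = (u + (m - a)) + 1 := by omega
        rw [this]
        exact s.adj _
  isGeodesic := by
    intro m
    set u := uFn η₀ d s with hudef
    have hu := uFn_le η₀ d s
    set a := d - u with ha
    by_cases h : m ≤ a
    · rw [if_pos h]
      have hidx : u + (a - m) = d - m := by omega
      rw [hidx]
      have hds := dist_ray_same hG η₀ d (d - m)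
      have hmin : min d (d - m) = d - m := by omega
      rw [hmin] at hds
      omega
    · rw [if_neg h]
      set j := u + (m - a) with hj
      by_cases hs : s = η₀
      · have hud : u = d := by rw [hudef, hs, uFn_eta]
        rw [hs]
        have hds := dist_ray_same hG η₀ d j
        have hmin : min d j = d := by omega
        rw [hmin] at hds
        omega
      · have hne : η₀ ≠ s := fun hh => hs hh.symm
        set k₀ := rayOverlap η₀ s with hk₀
        have hum : u = min k₀ d := uFn_ne η₀ d hs
        have hdr := dist_ray_ray hG hne d j
        have hmin : min k₀ (min d j) = u := by omega
        rw [hmin] at hdr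
        omega

lemma Rmap_apply_le (hG : G.IsTree) (η₀ : TreeRay G z) (d : ℕ) (s : TreeRay G z) {m : ℕ}
    (h : m ≤ d - uFn η₀ d s) :
    (Rmap hG η₀ d s).toFun m = η₀.toFun (d - m) := by
  have hu := uFn_le η₀ d s
  show (if m ≤ d - uFn η₀ d s then η₀.toFun (uFn η₀ d s + ((d - uFn η₀ d s) - m))
    else s.toFun (uFn η₀ d s + (m - (d - uFn η₀ d s)))) = _
  rw [if_pos h]
  exact congrArg η₀.toFun (by omega)

lemma Rmap_apply_gt (hG : G.IsTree) (η₀ : TreeRay G z) (d : ℕ) (s : TreeRay G z) {m : ℕ}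
    (h : d - uFn η₀ d s < m) :
    (Rmap hG η₀ d s).toFun m = s.toFun (uFn η₀ d s + (m - (d - uFn η₀ d s))) := by
  show (if m ≤ d - uFn η₀ d s then η₀.toFun (uFn η₀ d s + ((d - uFn η₀ d s) - m))
    else s.toFun (uFn η₀ d s + (m - (d - uFn η₀ d s)))) = _
  rw [if_neg (by omega)]

lemma Rmap_tail_of_u_eq_d (hG : G.IsTree) (η₀ : TreeRay G z) (d : ℕ) (s : TreeRay G z)
    (hud : uFn η₀ d s = d) (m : ℕ) :
    (Rmap hG η₀ d s).toFun m = s.toFun (d + m) := by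
  rcases Nat.eq_zero_or_pos m with hm | hm
  · subst hm
    rw [Rmap_apply_le hG η₀ d s (by omega)]
    rw [Nat.sub_zero]
    exact (uFn_agree hG η₀ d s (le_of_eq hud.symm)).symm
  · rw [Rmap_apply_gt hG η₀ d s (by omega)]
    exact congrArg s.toFun (by omega)

lemma Rmap_equiv (hG : G.IsTree) (η₀ : TreeRay G z) (d : ℕ) (s : TreeRay G z) (n : ℕ) :
    (Rmap hG η₀ d s).toFun (n + ((d - uFn η₀ d s) + 1)) = s.toFun (n + (uFn η₀ d s + 1)) := by
  rw [Rmap_apply_gt hG η₀ d s (by omega)]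
  exact congrArg s.toFun (by omega)


lemma Rmap_overlap_eta (hG : G.IsTree) (η₀ : TreeRay G z) (d : ℕ) {s : TreeRay G z}
    (hs : s ≠ η₀) :
    rayOverlap (Rmap hG η₀ d s) (Rmap hG η₀ d η₀) + uFn η₀ d s + uFn η₀ d η₀
      = rayOverlap s η₀ + d := by
  have hne : η₀ ≠ s := fun hh => hs hh.symm
  set k₀ := rayOverlap η₀ s with hk₀
  have hcomm : rayOverlap s η₀ = k₀ := overlap_comm s η₀
  have hus : uFn η₀ d s = min k₀ d := uFn_ne η₀ d hs
  have hue : uFn η₀ d η₀ = d := uFn_eta η₀ d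
  rcases le_or_gt d k₀ with hdk | hdk
  · -- k₀ ≥ d : overlap of images is k₀ - d
    have husd : uFn η₀ d s = d := by omega
    set N := k₀ - d with hN
    have h1 : (Rmap hG η₀ d s).toFun N = (Rmap hG η₀ d η₀).toFun N := by
      rw [Rmap_tail_of_u_eq_d hG η₀ d s husd, Rmap_tail_of_u_eq_d hG η₀ d η₀ hue]
      rw [show d + N = k₀ by omega]
      exact ((agree_iff_le_overlap hG hne k₀).mpr le_rfl).symm
    have h2 : (Rmap hG η₀ d s).toFun (N+1) ≠ (Rmap hG η₀ d η₀).toFun (N+1) := by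
      rw [Rmap_tail_of_u_eq_d hG η₀ d s husd, Rmap_tail_of_u_eq_d hG η₀ d η₀ hue]
      rw [show d + (N+1) = k₀ + 1 by omega]
      exact fun hh => (overlap_succ_ne hG hne) hh.symm
    rw [overlap_eq_of hG h1 h2]
    omega
  · -- k₀ < d : overlap of images is 0
    have h1 : (Rmap hG η₀ d s).toFun 0 = (Rmap hG η₀ d η₀).toFun 0 :=
      (Rmap hG η₀ d s).init.trans (Rmap hG η₀ d η₀).init.symm
    have h2 : (Rmap hG η₀ d s).toFun 1 ≠ (Rmap hG η₀ d η₀).toFun 1 := by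
      rw [Rmap_apply_le hG η₀ d s (by omega), Rmap_tail_of_u_eq_d hG η₀ d η₀ hue]
      intro hh
      have := ray_eq_index hh
      omega
    rw [overlap_eq_of hG h1 h2]
    omega

lemma Rmap_overlap_aux (hG : G.IsTree) (η₀ : TreeRay G z) (d : ℕ) {s s' : TreeRay G z}
    (hs : s ≠ η₀) (hs' : s' ≠ η₀) (hss' : s ≠ s')
    (hk : rayOverlap η₀ s ≤ rayOverlap η₀ s') :
    rayOverlap (Rmap hG η₀ d s) (Rmap hG η₀ d s') + uFn η₀ d s + uFn η₀ d s'
      = rayOverlap s s' + d := by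
  have hne : η₀ ≠ s := fun hh => hs hh.symm
  have hne' : η₀ ≠ s' := fun hh => hs' hh.symm
  set k₀ := rayOverlap η₀ s with hk₀
  set k₀' := rayOverlap η₀ s' with hk₀'
  set k := rayOverlap s s' with hkk
  have hus : uFn η₀ d s = min k₀ d := uFn_ne η₀ d hs
  have hus' : uFn η₀ d s' = min k₀' d := uFn_ne η₀ d hs'
  have hA : min k₀ k₀' ≤ k := by
    have := overlap_ultra hG hs hne' hss'
    rwa [overlap_comm s η₀, ← hk₀, ← hk₀', ← hkk] at this
  have hB : min k₀' k ≤ k₀ := by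
    have := overlap_ultra hG hne' (fun hh => hss' hh.symm) hne
    rwa [overlap_comm s' s, ← hk₀, ← hk₀', ← hkk] at this
  rcases le_or_gt d k₀ with hdk | hdk
  · -- d ≤ k₀ ≤ k₀' : both tails
    have husd : uFn η₀ d s = d := by omega
    have husd' : uFn η₀ d s' = d := by omega
    have hkd : d ≤ k := by omega
    set N := k - d with hN
    have h1 : (Rmap hG η₀ d s).toFun N = (Rmap hG η₀ d s').toFun N := by
      rw [Rmap_tail_of_u_eq_d hG η₀ d s husd, Rmap_tail_of_u_eq_d hG η₀ d s' husd']
      rw [show d + N = k by omega]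
      exact (agree_iff_le_overlap hG hss' k).mpr le_rfl
    have h2 : (Rmap hG η₀ d s).toFun (N+1) ≠ (Rmap hG η₀ d s').toFun (N+1) := by
      rw [Rmap_tail_of_u_eq_d hG η₀ d s husd, Rmap_tail_of_u_eq_d hG η₀ d s' husd']
      rw [show d + (N+1) = k + 1 by omega]
      exact overlap_succ_ne hG hss'
    rw [overlap_eq_of hG h1 h2]
    omega
  · rcases eq_or_lt_of_le hk with heq | hlt
    · -- k₀ = k₀' = t < d
      set t := k₀ with ht
      have hkt : t ≤ k := by omega
      have hust : uFn η₀ d s = t := by omega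
      have hust' : uFn η₀ d s' = t := by omega
      set N := (k - t) + (d - t) with hN
      have h1 : (Rmap hG η₀ d s).toFun N = (Rmap hG η₀ d s').toFun N := by
        rcases eq_or_lt_of_le hkt with hkeq | hklt
        · have hNa : N ≤ d - uFn η₀ d s := by omega
          have hNa' : N ≤ d - uFn η₀ d s' := by omega
          rw [Rmap_apply_le hG η₀ d s hNa, Rmap_apply_le hG η₀ d s' hNa']
        · rw [Rmap_apply_gt hG η₀ d s (by omega), Rmap_apply_gt hG η₀ d s' (by omega)]
          rw [hust, hust']
          rw [show t + (N - (d - t)) = k by omega]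
          exact (agree_iff_le_overlap hG hss' k).mpr le_rfl
      have h2 : (Rmap hG η₀ d s).toFun (N+1) ≠ (Rmap hG η₀ d s').toFun (N+1) := by
        rw [Rmap_apply_gt hG η₀ d s (by omega), Rmap_apply_gt hG η₀ d s' (by omega)]
        rw [hust, hust']
        rw [show t + (N + 1 - (d - t)) = k + 1 by omega]
        exact overlap_succ_ne hG hss'
      rw [overlap_eq_of hG h1 h2]
      omega
    · -- k₀ < k₀', k₀ < d
      have hkeq : k = k₀ := by omega
      rcases le_or_gt k₀' d with hk'd | hk'd
      · -- B1 : k₀ < k₀' ≤ d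
        have hust : uFn η₀ d s = k₀ := by omega
        have hust' : uFn η₀ d s' = k₀' := by omega
        set N := d - k₀' with hN
        have h1 : (Rmap hG η₀ d s).toFun N = (Rmap hG η₀ d s').toFun N := by
          rw [Rmap_apply_le hG η₀ d s (by omega), Rmap_apply_le hG η₀ d s' (by omega)]
        have h2 : (Rmap hG η₀ d s).toFun (N+1) ≠ (Rmap hG η₀ d s').toFun (N+1) := by
          rw [Rmap_apply_le hG η₀ d s (by omega), Rmap_apply_gt hG η₀ d s' (by omega)]
          intro hh
          have := ray_eq_index hh
          omega
        rw [overlap_eq_of hG h1 h2]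
        omega
      · -- B2a : k₀ < d < k₀'
        have hust : uFn η₀ d s = k₀ := by omega
        have husd' : uFn η₀ d s' = d := by omega
        have h1 : (Rmap hG η₀ d s).toFun 0 = (Rmap hG η₀ d s').toFun 0 :=
          (Rmap hG η₀ d s).init.trans (Rmap hG η₀ d s').init.symm
        have h2 : (Rmap hG η₀ d s).toFun 1 ≠ (Rmap hG η₀ d s').toFun 1 := by
          rw [Rmap_apply_le hG η₀ d s (by omega), Rmap_tail_of_u_eq_d hG η₀ d s' husd']
          intro hh
          have := ray_eq_index hh
          omega
        rw [overlap_eq_of hG h1 h2]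
        omega

lemma Rmap_overlap (hG : G.IsTree) (η₀ : TreeRay G z) (d : ℕ) {s s' : TreeRay G z}
    (hss' : s ≠ s') :
    rayOverlap (Rmap hG η₀ d s) (Rmap hG η₀ d s') + uFn η₀ d s + uFn η₀ d s'
      = rayOverlap s s' + d := by
  by_cases hs' : s' = η₀
  · rw [hs']
    exact Rmap_overlap_eta hG η₀ d (fun hh => (hss' (hh.trans hs'.symm)))
  · by_cases hs : s = η₀
    · rw [hs]
      have := Rmap_overlap_eta hG η₀ d hs'
      rw [overlap_comm (Rmap hG η₀ d s') (Rmap hG η₀ d η₀), overlap_comm s' η₀] at this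
      omega
    · rcases le_total (rayOverlap η₀ s) (rayOverlap η₀ s') with h | h
      · exact Rmap_overlap_aux hG η₀ d hs hs' hss' h
      · have := Rmap_overlap_aux hG η₀ d hs' hs (fun hh => hss' hh.symm) h
        rw [overlap_comm (Rmap hG η₀ d s') (Rmap hG η₀ d s), overlap_comm s' s] at this
        omega

end BaseChange

lemma exists_h {Ω : Type*} (D : Ω → Ω → ℤ) (hsymm : ∀ a b, D a b = D b a)
    (hcoc : ∀ a b c e : Ω, a ≠ b → a ≠ c → a ≠ e → b ≠ c → b ≠ e → c ≠ e →
      D a b + D c e = D a e + D c b)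
    (a₀ b₀ : Ω) (hab : a₀ ≠ b₀) :
    ∃ h : Ω → ℤ, ∀ a b, a ≠ b → 2 * D a b = h a + h b := by
  classical
  by_cases hthird : ∃ c₀, c₀ ≠ a₀ ∧ c₀ ≠ b₀
  · obtain ⟨c₀, hca, hcb⟩ := hthird
    set base : Ω → ℤ := fun c => D c b₀ + D c a₀ - D a₀ b₀ with hbase
    set va : ℤ := D a₀ b₀ + D a₀ c₀ - D b₀ c₀ with hva
    set vb : ℤ := D a₀ b₀ + D b₀ c₀ - D a₀ c₀ with hvb
    set h : Ω → ℤ := Function.update (Function.update base a₀ va) b₀ vb with hh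
    have hha : h a₀ = va := by
      rw [hh, Function.update_of_ne hab, Function.update_self]
    have hhb : h b₀ = vb := by
      rw [hh, Function.update_self]
    have hhc : ∀ c, c ≠ a₀ → c ≠ b₀ → h c = D c b₀ + D c a₀ - D a₀ b₀ := by
      intro c h1 h2
      rw [hh, Function.update_of_ne h2, Function.update_of_ne h1]
    have key : ∀ c, c ≠ a₀ → c ≠ b₀ → D a₀ c + D b₀ c₀ = D a₀ c₀ + D b₀ c := by
      intro c h1 h2
      by_cases hc : c = c₀
      · rw [hc]
      · exact hcoc a₀ c b₀ c₀ (Ne.symm h1) hab hca.symm (fun hh => h2 hh) hc hcb.symm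
    have gen : ∀ a b : Ω, a ≠ b → a ≠ a₀ → a ≠ b₀ → b ≠ a₀ → b ≠ b₀ →
        2 * D a b + 2 * D a₀ b₀ = D a b₀ + D a a₀ + D b b₀ + D b a₀ := by
      intro a b hne h1 h2 h3 h4
      have e1 := hcoc a b a₀ b₀ hne h1 h2 h3 h4 hab
      have e2 := hcoc a b b₀ a₀ hne h2 h1 h4 h3 hab.symm
      have s1 := hsymm a₀ b₀
      have s2 := hsymm a₀ b
      have s3 := hsymm b₀ b
      omega
    refine ⟨h, ?_⟩
    intro a b hne
    by_cases ha1 : a = a₀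
    · have hba : b ≠ a₀ := fun hx => hne (ha1.trans hx.symm)
      rw [ha1]
      by_cases hb1 : b = b₀
      · rw [hb1, hha, hhb]
        omega
      · rw [hha, hhc b hba hb1]
        have hk := key b hba hb1
        have s2 := hsymm b b₀
        have s3 := hsymm b a₀
        omega
    · by_cases ha2 : a = b₀
      · have hbb : b ≠ b₀ := fun hx => hne (ha2.trans hx.symm)
        rw [ha2]
        by_cases hb1 : b = a₀
        · rw [hb1, hhb, hha]
          have s1 := hsymm b₀ a₀
          omega
        · rw [hhb, hhc b hb1 hbb]
          have hk := key b hb1 hbb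
          have s2 := hsymm b b₀
          have s3 := hsymm b a₀
          omega
      · by_cases hb1 : b = a₀
        · rw [hb1, hha, hhc a ha1 ha2]
          have hk := key a ha1 ha2
          have s2 := hsymm a a₀
          have s3 := hsymm a b₀
          omega
        · by_cases hb2 : b = b₀
          · rw [hb2, hhb, hhc a ha1 ha2]
            have hk := key a ha1 ha2
            have s2 := hsymm a a₀
            have s3 := hsymm a b₀
            omega
          · rw [hhc a ha1 ha2, hhc b hb1 hb2]
            have hg := gen a b hne ha1 ha2 hb1 hb2
            omega
  · push_neg at hthird
    refine ⟨fun _ => D a₀ b₀, ?_⟩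
    intro a b hne
    dsimp only
    by_cases ha : a = a₀
    · have hb : b = b₀ := hthird b (fun hx => hne (ha.trans hx.symm))
      rw [ha, hb]
      omega
    · have ha' : a = b₀ := hthird a ha
      have hb : b ≠ b₀ := fun hx => hne (ha'.trans hx.symm)
      have hb' : b = a₀ := by
        by_contra hc
        exact hb (hthird b hc)
      rw [ha', hb']
      have := hsymm b₀ a₀
      omega


lemma eq_of_eventually_eq (hG : G.IsTree) {x : V} {r s : TreeRay G x} {a b : ℕ}
    (hab : ∀ n, r.toFun (n + a) = s.toFun (n + b)) : r = s := by
  have h0 := hab 0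
  have hab' : a = b := by
    have := ray_eq_index h0
    omega
  subst hab'
  refine TreeRay.ext' (funext fun m => ?_)
  exact agree_of_agree_ge hG (hab m) (by omega)

def rayCopyBase {x y : V} (r : TreeRay G x) (h : x = y) : TreeRay G y where
  toFun := r.toFun
  init := r.init.trans h
  adj := r.adj
  isGeodesic := fun n => by rw [← h]; exact r.isGeodesic n

lemma Rmap_ne {z : V} (hG : G.IsTree) (η₀ : TreeRay G z) (d : ℕ) {s s' : TreeRay G z}
    (hne : s ≠ s') : Rmap hG η₀ d s ≠ Rmap hG η₀ d s' := by
  intro heq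
  apply hne
  set u := uFn η₀ d s with hu
  set u' := uFn η₀ d s' with hu'
  refine eq_of_eventually_eq hG (a := (d - u' + 1) + (u + 1)) (b := (d - u + 1) + (u' + 1)) ?_
  intro n
  have e1 := Rmap_equiv hG η₀ d s (n + (d - u' + 1))
  have e2 := Rmap_equiv hG η₀ d s' (n + (d - u + 1))
  rw [heq] at e1
  rw [show n + (d - u' + 1) + (d - u + 1) = n + (d - u + 1) + (d - u' + 1) by omega] at e1
  have e3 := e1.symm.trans e2
  rw [show n + ((d - u' + 1) + (u + 1)) = n + (d - u' + 1) + (u + 1) by omega,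
      show n + ((d - u + 1) + (u' + 1)) = n + (d - u + 1) + (u' + 1) by omega]
  exact e3

lemma exists_ray_first (hG : G.IsTree) [G.LocallyFinite] (hdeg : ∀ v, 2 ≤ G.degree v)
    {x z : V} (hz : G.Adj x z) : ∃ r : TreeRay G x, r.toFun 1 = z := by
  have hd : G.dist x z = 1 := SimpleGraph.dist_eq_one_iff_adj.mpr hz
  obtain ⟨r, hr⟩ := exists_ray_through hG hdeg x z
  rw [hd] at hr
  exact ⟨r, hr⟩

lemma ray_first_adj {x : V} (r : TreeRay G x) : G.Adj x (r.toFun 1) := by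
  have := r.adj 0
  rwa [r.init] at this

lemma exists_opp (hG : G.IsTree) [G.LocallyFinite] (hdeg : ∀ v, 2 ≤ G.degree v)
    {x : V} (a : TreeRay G x) : ∃ c : TreeRay G x, rayOverlap a c = 0 ∧ c ≠ a := by
  have hcard : 1 < (G.neighborFinset x).card := by
    have := hdeg x
    rw [← G.card_neighborFinset_eq_degree] at this
    omega
  obtain ⟨z', hz'mem, hz'ne⟩ := Finset.exists_mem_ne hcard (a.toFun 1)
  rw [SimpleGraph.mem_neighborFinset] at hz'mem
  obtain ⟨c, hc1⟩ := exists_ray_first hG hdeg hz'mem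
  have hne1 : a.toFun 1 ≠ c.toFun 1 := by
    rw [hc1]
    exact fun hh => hz'ne (hh.symm)
  have h0 : a.toFun 0 = c.toFun 0 := a.init.trans c.init.symm
  refine ⟨c, overlap_eq_of hG h0 hne1, fun hh => hne1 (by rw [hh])⟩


end CRT

open CRT

/-- Let `T₁, T₂` be locally finite trees without ends and `F : ∂T₁ → ∂T₂` a bijection of
their boundaries preserving the cross-ratio of every four pairwise distinct boundary
points. Then there is a bijective isometry `T₁ → T₂` inducing `F` on the boundaries. -/
theorem crossRatio_bijection_extends_to_isometry {V W : Type*}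
    (G : SimpleGraph V) (H : SimpleGraph W) (hG : G.IsTree) (hH : H.IsTree)
    [G.LocallyFinite] [H.LocallyFinite] (hGe : NoEnds G) (hHe : NoEnds H)
    (x₀ : V) (y₀ : W) (F : TreeRay G x₀ → TreeRay H y₀) (hbij : Function.Bijective F)
    (hcr : ∀ ξ₁ ξ₂ ξ₃ ξ₄ : TreeRay G x₀,
      ξ₁ ≠ ξ₂ → ξ₁ ≠ ξ₃ → ξ₁ ≠ ξ₄ → ξ₂ ≠ ξ₃ → ξ₂ ≠ ξ₄ → ξ₃ ≠ ξ₄ →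
      crossRatio (F ξ₁) (F ξ₂) (F ξ₃) (F ξ₄) = crossRatio ξ₁ ξ₂ ξ₃ ξ₄) :
    ∃ f : GraphIsomBet G H, ∀ ξ : TreeRay G x₀, RayEquiv (f.mapRay ξ) (F ξ) := by
  classical
  have hinj := hbij.1
  -- Step 1: the cross-ratio hypothesis as a numerical identity
  have hDnat : ∀ ξ₁ ξ₂ ξ₃ ξ₄ : TreeRay G x₀, ξ₁ ≠ ξ₂ → ξ₁ ≠ ξ₃ → ξ₁ ≠ ξ₄ → ξ₂ ≠ ξ₃ →
      ξ₂ ≠ ξ₄ → ξ₃ ≠ ξ₄ →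
      rayOverlap (F ξ₃) (F ξ₁) + rayOverlap (F ξ₄) (F ξ₂) + rayOverlap ξ₃ ξ₂ + rayOverlap ξ₄ ξ₁
        = rayOverlap (F ξ₃) (F ξ₂) + rayOverlap (F ξ₄) (F ξ₁) + rayOverlap ξ₃ ξ₁
            + rayOverlap ξ₄ ξ₂ := by
    intro ξ₁ ξ₂ ξ₃ ξ₄ h12 h13 h14 h23 h24 h34
    have hc := hcr ξ₁ ξ₂ ξ₃ ξ₄ h12 h13 h14 h23 h24 h34
    have f31 : F ξ₃ ≠ F ξ₁ := fun hh => h13 (hinj hh).symm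
    have f42 : F ξ₄ ≠ F ξ₂ := fun hh => h24 (hinj hh).symm
    have f32 : F ξ₃ ≠ F ξ₂ := fun hh => h23 (hinj hh).symm
    have f41 : F ξ₄ ≠ F ξ₁ := fun hh => h14 (hinj hh).symm
    simp only [crossRatio, rho] at hc
    rw [if_neg f31, if_neg f42, if_neg f32, if_neg f41,
      if_neg (Ne.symm h13), if_neg (Ne.symm h24), if_neg (Ne.symm h23),
      if_neg (Ne.symm h14)] at hc
    rw [← Real.exp_add, ← Real.exp_add, ← Real.exp_sub, ← Real.exp_add, ← Real.exp_add,
      ← Real.exp_sub] at hc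
    have heq := Real.exp_eq_exp.mp hc
    have hr : (rayOverlap (F ξ₃) (F ξ₁) : ℝ) + rayOverlap (F ξ₄) (F ξ₂)
        + rayOverlap ξ₃ ξ₂ + rayOverlap ξ₄ ξ₁
        = (rayOverlap (F ξ₃) (F ξ₂) : ℝ) + rayOverlap (F ξ₄) (F ξ₁)
            + rayOverlap ξ₃ ξ₁ + rayOverlap ξ₄ ξ₂ := by linarith
    exact_mod_cast hr
  -- Step 2: the function h with 2·D = h + h
  set D : TreeRay G x₀ → TreeRay G x₀ → ℤ :=
    fun a b => (rayOverlap (F a) (F b) : ℤ) - (rayOverlap a b : ℤ) with hDdef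
  have hDsymm : ∀ a b, D a b = D b a := by
    intro a b
    simp only [hDdef]
    rw [overlap_comm (F a) (F b), overlap_comm a b]
  have hDcoc : ∀ a b c e : TreeRay G x₀, a ≠ b → a ≠ c → a ≠ e → b ≠ c → b ≠ e → c ≠ e →
      D a b + D c e = D a e + D c b := by
    intro a b c e hab hac hae hbc hbe hce
    have := hDnat b e a c hbe hab.symm hbc hae.symm hce.symm hac
    simp only [hDdef]
    omega
  obtain ⟨abase, -⟩ := exists_ray_through hG hGe x₀ x₀
  obtain ⟨bbase, hob, hbne⟩ := exists_opp hG hGe abase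
  obtain ⟨h, hP⟩ := exists_h D hDsymm hDcoc abase bbase hbne.symm
  have hP' : ∀ a b : TreeRay G x₀, a ≠ b →
      2 * (rayOverlap (F a) (F b) : ℤ) = 2 * (rayOverlap a b : ℤ) + h a + h b := by
    intro a b hne
    have := hP a b hne
    simp only [hDdef] at this
    omega
  -- Step 3: the Z lemma
  have hZ : ∀ a b c : TreeRay G x₀, a ≠ b → 1 ≤ rayOverlap a b → c ≠ a → c ≠ b →
      rayOverlap a c = 0 → rayOverlap b c = 0 →
      (h a = h b ∨ h c = max (h a) (h b) + 2 * (rayOverlap a b : ℤ)) := by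
    intro a b c hab ho hca hcb hac hbc
    have P := hP' a b hab
    have Q := hP' a c (fun hh => hca hh.symm)
    have R := hP' b c (fun hh => hcb hh.symm)
    rw [hac] at Q
    rw [hbc] at R
    have fab : F a ≠ F b := fun hh => hab (hinj hh)
    have fac : F a ≠ F c := fun hh => hca ((hinj hh).symm)
    have fbc : F b ≠ F c := fun hh => hcb ((hinj hh).symm)
    have U1 := overlap_ultra hH fab fbc fac
    have U2 := overlap_ultra hH (fun hh => fab hh.symm) fac fbc
    have U3 := overlap_ultra hH fac (fun hh => fbc hh.symm) fab
    have C1 : rayOverlap (F b) (F a) = rayOverlap (F a) (F b) := overlap_comm _ _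
    have C2 : rayOverlap (F c) (F a) = rayOverlap (F a) (F c) := overlap_comm _ _
    have C3 : rayOverlap (F c) (F b) = rayOverlap (F b) (F c) := overlap_comm _ _
    omega
  -- Step 4: the distinguished boundary point ξ₀
  have hXi : ∃ ξ₀ : TreeRay G x₀, 0 ≤ h ξ₀ ∧ (∀ ξ, h ξ ≤ h ξ₀) ∧
      (∀ ξ, ξ ≠ ξ₀ → rayOverlap ξ₀ ξ = 0 ∨ h ξ = h ξ₀) := by
    by_cases hcase : ∀ a b : TreeRay G x₀, a ≠ b → 1 ≤ rayOverlap a b → h a = h b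
    · -- h is constant on each first-edge class
      have hcard : 1 < (G.neighborFinset x₀).card := by
        have := hGe x₀
        rw [← G.card_neighborFinset_eq_degree] at this
        omega
      have hBne : (G.neighborFinset x₀).Nonempty := Finset.card_pos.mp (by omega)
      set rayN : V → TreeRay G x₀ := fun z =>
        if hz : G.Adj x₀ z then (exists_ray_first hG hGe hz).choose
        else (exists_ray_through hG hGe x₀ x₀).choose with hrayN
      have hrayN1 : ∀ z, G.Adj x₀ z → (rayN z).toFun 1 = z := by
        intro z hz
        simp only [hrayN]
        rw [dif_pos hz]
        exact (exists_ray_first hG hGe hz).choose_spec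
      obtain ⟨z₀, hz₀B, hz₀max⟩ :=
        (G.neighborFinset x₀).exists_max_image (fun z => h (rayN z)) hBne
      have hz₀adj : G.Adj x₀ z₀ := (SimpleGraph.mem_neighborFinset _ _ _).mp hz₀B
      have hmax : ∀ ξ, h ξ ≤ h (rayN z₀) := by
        intro ξ
        have hadj : G.Adj x₀ (ξ.toFun 1) := ray_first_adj ξ
        have hmem : ξ.toFun 1 ∈ G.neighborFinset x₀ :=
          (SimpleGraph.mem_neighborFinset _ _ _).mpr hadj
        have hr1 := hrayN1 _ hadj
        have heq : h ξ = h (rayN (ξ.toFun 1)) := by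
          by_cases he : ξ = rayN (ξ.toFun 1)
          · rw [← he]
          · refine hcase _ _ he ?_
            exact (agree_iff_le_overlap hG he 1).mp (by rw [hr1])
        rw [heq]
        exact hz₀max _ hmem
      have hdich : ∀ ξ, ξ ≠ rayN z₀ → rayOverlap (rayN z₀) ξ = 0 ∨ h ξ = h (rayN z₀) := by
        intro ξ hne
        rcases Nat.eq_zero_or_pos (rayOverlap (rayN z₀) ξ) with h0 | h1
        · exact Or.inl h0
        · refine Or.inr (hcase ξ (rayN z₀) hne ?_)
          rw [overlap_comm]
          omega
      have hnn : 0 ≤ h (rayN z₀) := by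
        obtain ⟨z₁, hz₁B, hz₁ne⟩ := Finset.exists_mem_ne hcard z₀
        have hz₁adj : G.Adj x₀ z₁ := (SimpleGraph.mem_neighborFinset _ _ _).mp hz₁B
        have h1a : (rayN z₀).toFun 1 = z₀ := hrayN1 _ hz₀adj
        have h1b : (rayN z₁).toFun 1 = z₁ := hrayN1 _ hz₁adj
        have hne1 : (rayN z₀).toFun 1 ≠ (rayN z₁).toFun 1 := by
          rw [h1a, h1b]
          exact fun hh => hz₁ne hh.symm
        have h0 : (rayN z₀).toFun 0 = (rayN z₁).toFun 0 :=
          (rayN z₀).init.trans (rayN z₁).init.symm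
        have hov0 : rayOverlap (rayN z₀) (rayN z₁) = 0 := overlap_eq_of hG h0 hne1
        have hner : rayN z₀ ≠ rayN z₁ := fun hh => hne1 (by rw [hh])
        have := hP' (rayN z₀) (rayN z₁) hner
        rw [hov0] at this
        have hle := hmax (rayN z₁)
        have hpos : (0:ℤ) ≤ (rayOverlap (F (rayN z₀)) (F (rayN z₁)) : ℤ) := Int.natCast_nonneg _
        omega
      exact ⟨rayN z₀, hnn, hmax, hdich⟩
    · push_neg at hcase
      obtain ⟨a, b, hab, hov, hhab⟩ := hcase
      obtain ⟨c, hac, hca⟩ := exists_opp hG hGe a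
      have hcb : c ≠ b := by
        intro hh
        rw [hh] at hac
        omega
      have hbc0 : rayOverlap b c = 0 := by
        rcases Nat.eq_zero_or_pos (rayOverlap b c) with h0 | h1
        · exact h0
        · exfalso
          have := overlap_ultra hG hab hcb.symm hca.symm
          omega
      have hcast1 : (1:ℤ) ≤ (rayOverlap a b : ℤ) := by exact_mod_cast hov
      have hKc : h c = max (h a) (h b) + 2 * (rayOverlap a b : ℤ) :=
        (hZ a b c hab hov hca hcb hac hbc0).resolve_left hhab
      have hmax : ∀ ξ, h ξ ≤ h c := by
        intro ξ
        by_cases hxa : ξ = a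
        · rw [hxa]; omega
        · by_cases hxb : ξ = b
          · rw [hxb]; omega
          · by_cases hoa : rayOverlap a ξ = 0
            · have hbξ : rayOverlap b ξ = 0 := by
                rcases Nat.eq_zero_or_pos (rayOverlap b ξ) with h0 | h1
                · exact h0
                · exfalso
                  have := overlap_ultra hG hab (fun hh => hxb hh.symm) (fun hh => hxa hh.symm)
                  omega
              have := (hZ a b ξ hab hov hxa hxb hoa hbξ).resolve_left hhab
              omega
            · by_cases hhx : h ξ = h a
              · rw [hhx]; omega
              · have h1 : 1 ≤ rayOverlap a ξ := by omega
                have hcξ : c ≠ ξ := by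
                  intro hh
                  rw [← hh] at hoa
                  exact hoa hac
                have hξc0 : rayOverlap ξ c = 0 := by
                  rcases Nat.eq_zero_or_pos (rayOverlap ξ c) with h0 | h1'
                  · exact h0
                  · exfalso
                    have := overlap_ultra hG (fun hh => hxa hh.symm) (fun hh => hcξ hh.symm)
                      (fun hh => hca hh.symm)
                    omega
                have := (hZ a ξ c (fun hh => hxa hh.symm) h1 hca hcξ hac hξc0).resolve_left
                  (fun hh => hhx hh.symm)
                omega
      have hdich : ∀ ξ, ξ ≠ c → rayOverlap c ξ = 0 ∨ h ξ = h c := by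
        intro ξ hnec
        rcases Nat.eq_zero_or_pos (rayOverlap c ξ) with h0 | hpos
        · exact Or.inl h0
        · right
          have hcc : rayOverlap c a = 0 := by rw [overlap_comm]; exact hac
          have hcb' : rayOverlap c b = 0 := by rw [overlap_comm]; exact hbc0
          have hxa : ξ ≠ a := by
            intro hh
            rw [hh] at hpos
            omega
          have hxb : ξ ≠ b := by
            intro hh
            rw [hh] at hpos
            omega
          have hoaξ : rayOverlap a ξ = 0 := by
            rcases Nat.eq_zero_or_pos (rayOverlap a ξ) with h0 | hp
            · exact h0
            · exfalso
              have hξc : 1 ≤ rayOverlap ξ c := by rw [overlap_comm]; omega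
              have := overlap_ultra hG (fun hh => hxa hh.symm) hnec (fun hh => hca hh.symm)
              omega
          have hbξ0 : rayOverlap b ξ = 0 := by
            rcases Nat.eq_zero_or_pos (rayOverlap b ξ) with h0 | hp
            · exact h0
            · exfalso
              have := overlap_ultra hG hab (fun hh => hxb hh.symm) (fun hh => hxa hh.symm)
              omega
          have := (hZ a b ξ hab hov hxa hxb hoaξ hbξ0).resolve_left hhab
          omega
      have hnn : 0 ≤ h c := by
        have Q := hP' a c (fun hh => hca hh.symm)
        have R := hP' b c (fun hh => hcb hh.symm)
        rw [hac] at Q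
        rw [hbc0] at R
        have q1 : (0:ℤ) ≤ (rayOverlap (F a) (F c) : ℤ) := Int.natCast_nonneg _
        have r1 : (0:ℤ) ≤ (rayOverlap (F b) (F c) : ℤ) := Int.natCast_nonneg _
        omega
      exact ⟨c, hnn, hmax, hdich⟩
  obtain ⟨ξ₀, hnn, hmax, hdich⟩ := hXi
  -- Step 5: the new base point and the key overlap identity
  set d : ℕ := (h ξ₀).toNat with hd
  have hdz : (d : ℤ) = h ξ₀ := Int.toNat_of_nonneg hnn
  set η₀ : TreeRay H y₀ := F ξ₀ with hη₀
  have hu2 : ∀ ξ : TreeRay G x₀, 2 * (uFn η₀ d (F ξ) : ℤ) = h ξ₀ + h ξ := by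
    intro ξ
    by_cases he : ξ = ξ₀
    · rw [he, ← hη₀, uFn_eta]
      omega
    · have hFne : F ξ ≠ η₀ := by
        rw [hη₀]
        exact fun hh => he (hinj hh)
      rw [uFn_ne η₀ d hFne, hη₀]
      have hPx := hP' ξ₀ ξ (fun hh => he hh.symm)
      have hle := hmax ξ
      rcases hdich ξ he with h0 | hsame
      · rw [h0] at hPx
        omega
      · have hpos : (0:ℤ) ≤ (rayOverlap ξ₀ ξ : ℤ) := Int.natCast_nonneg _
        omega
  have hkey : ∀ ξ ξ' : TreeRay G x₀, ξ ≠ ξ' →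
      rayOverlap (Rmap hH η₀ d (F ξ)) (Rmap hH η₀ d (F ξ')) = rayOverlap ξ ξ' := by
    intro ξ ξ' hne
    have hFne : F ξ ≠ F ξ' := fun hh => hne (hinj hh)
    have e1 := Rmap_overlap hH η₀ d hFne
    have e2 := hP' ξ ξ' hne
    have e3 := hu2 ξ
    have e4 := hu2 ξ'
    omega
  -- Step 6: the isometry
  have hrayTspec : ∀ v, ((exists_ray_through hG hGe x₀ v).choose).toFun (G.dist x₀ v) = v :=
    fun v => (exists_ray_through hG hGe x₀ v).choose_spec
  set rayT : V → TreeRay G x₀ := fun v => (exists_ray_through hG hGe x₀ v).choose with hrayT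
  set fmap : V → W := fun v => (Rmap hH η₀ d (F (rayT v))).toFun (G.dist x₀ v) with hfmap
  have hfspec : ∀ (ξ : TreeRay G x₀) (n : ℕ),
      fmap (ξ.toFun n) = (Rmap hH η₀ d (F ξ)).toFun n := by
    intro ξ n
    have hdist : G.dist x₀ (ξ.toFun n) = n := ξ.isGeodesic n
    by_cases he : rayT (ξ.toFun n) = ξ
    · simp only [hfmap]
      rw [hdist, he]
    · have hagree : (rayT (ξ.toFun n)).toFun n = ξ.toFun n := by
        obtain ⟨v, hv⟩ : ∃ v, ξ.toFun n = v := ⟨_, rfl⟩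
        rw [hv] at hdist ⊢
        rw [← hdist]
        exact hrayTspec v
      have hle : n ≤ rayOverlap (rayT (ξ.toFun n)) ξ :=
        (agree_iff_le_overlap hG he n).mp hagree
      have hRne' : Rmap hH η₀ d (F (rayT (ξ.toFun n))) ≠ Rmap hH η₀ d (F ξ) :=
        Rmap_ne hH η₀ d (fun hh => he (hinj hh))
      have hag2 : (Rmap hH η₀ d (F (rayT (ξ.toFun n)))).toFun n
          = (Rmap hH η₀ d (F ξ)).toFun n := by
        refine (agree_iff_le_overlap hH hRne' n).mpr ?_
        rw [hkey _ _ he]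
        exact hle
      simp only [hfmap]
      rw [hdist]
      exact hag2
  have hbijf : Function.Bijective fmap := by
    constructor
    · intro u v huv
      have hu := hrayTspec u
      have hv := hrayTspec v
      simp only [hfmap] at huv
      have hmn : G.dist x₀ u = G.dist x₀ v := ray_eq_index huv
      by_cases he : rayT u = rayT v
      · calc u = (rayT u).toFun (G.dist x₀ u) := hu.symm
          _ = (rayT v).toFun (G.dist x₀ v) := by rw [he, hmn]
          _ = v := hv
      · rw [hmn] at huv
        have hRne' : Rmap hH η₀ d (F (rayT u)) ≠ Rmap hH η₀ d (F (rayT v)) :=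
          Rmap_ne hH η₀ d (fun hh => he (hinj hh))
        have hle := (agree_iff_le_overlap hH hRne' (G.dist x₀ v)).mp huv
        rw [hkey _ _ he] at hle
        have hag : (rayT u).toFun (G.dist x₀ v) = (rayT v).toFun (G.dist x₀ v) :=
          (agree_iff_le_overlap hG he (G.dist x₀ v)).mpr hle
        calc u = (rayT u).toFun (G.dist x₀ u) := hu.symm
          _ = (rayT u).toFun (G.dist x₀ v) := by rw [hmn]
          _ = (rayT v).toFun (G.dist x₀ v) := hag
          _ = v := hv
    · intro w
      obtain ⟨ρ, hρ⟩ := exists_ray_through hH hHe (η₀.toFun d) w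
      have hdy : H.dist (η₀.toFun d) y₀ = d := by
        rw [SimpleGraph.dist_comm]
        exact η₀.isGeodesic d
      obtain ⟨τ, hτ⟩ := exists_ray_through hH hHe (η₀.toFun d) y₀
      rw [hdy] at hτ
      set σ : TreeRay H y₀ := rayCopyBase (Rmap hH τ d ρ) hτ with hσ
      obtain ⟨ξ, hξ⟩ := hbij.2 σ
      refine ⟨ξ.toFun (H.dist (η₀.toFun d) w), ?_⟩
      rw [hfspec ξ _, hξ]
      have hRρ : Rmap hH η₀ d σ = ρ := by
        refine eq_of_eventually_eq hH
          (a := (d - uFn τ d ρ + 1) + (d - uFn η₀ d σ + 1))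
          (b := (uFn η₀ d σ + 1) + (uFn τ d ρ + 1)) ?_
        intro k
        have e1 := Rmap_equiv hH η₀ d σ (k + (d - uFn τ d ρ + 1))
        have e2 := Rmap_equiv hH τ d ρ (k + (uFn η₀ d σ + 1))
        have hidx1 : k + ((d - uFn τ d ρ + 1) + (d - uFn η₀ d σ + 1))
            = k + (d - uFn τ d ρ + 1) + (d - uFn η₀ d σ + 1) := by omega
        have hidx2 : k + (d - uFn τ d ρ + 1) + (uFn η₀ d σ + 1)
            = k + (uFn η₀ d σ + 1) + (d - uFn τ d ρ + 1) := by omega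
        have hidx3 : k + (uFn η₀ d σ + 1) + (uFn τ d ρ + 1)
            = k + ((uFn η₀ d σ + 1) + (uFn τ d ρ + 1)) := by omega
        rw [hidx1, e1, hidx2]
        rw [show σ.toFun (k + (uFn η₀ d σ + 1) + (d - uFn τ d ρ + 1))
          = (Rmap hH τ d ρ).toFun (k + (uFn η₀ d σ + 1) + (d - uFn τ d ρ + 1)) from rfl]
        rw [e2, hidx3]
      rw [hRρ]
      exact hρ
  have hdist' : ∀ u v, H.dist (fmap u) (fmap v) = G.dist u v := by
    intro u v
    have hu := hrayTspec u
    have hv := hrayTspec v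
    have hfu : fmap u = (Rmap hH η₀ d (F (rayT u))).toFun (G.dist x₀ u) := by
      simp only [hfmap]
    have hfv : fmap v = (Rmap hH η₀ d (F (rayT v))).toFun (G.dist x₀ v) := by
      simp only [hfmap]
    by_cases he : rayT u = rayT v
    · have hGd := dist_ray_same hG (rayT u) (G.dist x₀ u) (G.dist x₀ v)
      have hHd := dist_ray_same hH (Rmap hH η₀ d (F (rayT u))) (G.dist x₀ u) (G.dist x₀ v)
      have hv' : (rayT u).toFun (G.dist x₀ v) = v := by rw [he]; exact hv
      have hG2 : G.dist ((rayT u).toFun (G.dist x₀ u)) ((rayT u).toFun (G.dist x₀ v))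
          = G.dist u v := by rw [hu, hv']
      have hH2 : fmap v = (Rmap hH η₀ d (F (rayT u))).toFun (G.dist x₀ v) := by
        rw [hfv, he]
      rw [hfu, hH2, ← hG2]
      omega
    · have hGd := dist_ray_ray hG he (G.dist x₀ u) (G.dist x₀ v)
      have hHd := dist_ray_ray hH (Rmap_ne hH η₀ d (fun hh => he (hinj hh)))
        (G.dist x₀ u) (G.dist x₀ v)
      rw [hkey _ _ he] at hHd
      have hG2 : G.dist ((rayT u).toFun (G.dist x₀ u)) ((rayT v).toFun (G.dist x₀ v))
          = G.dist u v := by rw [hu, hv]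
      rw [hfu, hfv, ← hG2]
      omega
  have hadj' : ∀ u v, H.Adj (fmap u) (fmap v) ↔ G.Adj u v := by
    intro u v
    rw [← SimpleGraph.dist_eq_one_iff_adj, ← SimpleGraph.dist_eq_one_iff_adj, hdist' u v]
  refine ⟨⟨fmap, hbijf, hadj', hdist'⟩, ?_⟩
  intro ξ
  refine ⟨(d - uFn η₀ d (F ξ)) + 1, uFn η₀ d (F ξ) + 1, ?_⟩
  intro k
  show fmap (ξ.toFun (k + _)) = (F ξ).toFun (k + _)
  rw [hfspec]
  exact Rmap_equiv hH η₀ d (F ξ) k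
end

section
/- Let T be a locally finite tree, Γ a group acting on T by isometries without inversion such that every non-identity element of Γ is hyperbolic (fixes no vertex). Then Γ is a free group. -/
set_option maxHeartbeats 1000000

namespace TreeFreeAux

noncomputable section
open CategoryTheory
universe u w

variable {V : Type u}

/-! ### Walk products in a tree -/

def prodY {G : SimpleGraph V} {X : Type*} [Group X] (y : V → V → X) :
    ∀ {a b : V}, G.Walk a b → X
  | _, _, SimpleGraph.Walk.nil => 1
  | _, _, SimpleGraph.Walk.cons (u := a) (v := c) _ p => prodY y p * y a c

@[simp] lemma prodY_nil {G : SimpleGraph V} {X : Type*} [Group X] (y : V → V → X) (a : V) :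
    prodY y (SimpleGraph.Walk.nil : G.Walk a a) = 1 := rfl

@[simp] lemma prodY_cons {G : SimpleGraph V} {X : Type*} [Group X] (y : V → V → X)
    {a c b : V} (h : G.Adj a c) (p : G.Walk c b) :
    prodY y (SimpleGraph.Walk.cons h p) = prodY y p * y a c := rfl

lemma prodY_concat {G : SimpleGraph V} {X : Type*} [Group X] (y : V → V → X)
    {a u w : V} (p : G.Walk a u) (h : G.Adj u w) :
    prodY y (p.concat h) = y u w * prodY y p := by
  induction p with
  | nil => simp [SimpleGraph.Walk.concat]
  | cons h' p ih =>
      rw [SimpleGraph.Walk.concat_cons, prodY_cons, prodY_cons, ih, mul_assoc]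

lemma prodY_walk_eq {G : SimpleGraph V} {X : Type*} [Group X] (y : V → V → X)
    (H : V → X) (hH : ∀ u w, G.Adj u w → H w = y u w * H u) :
    ∀ {a b : V} (p : G.Walk a b), H b = prodY y p * H a := by
  intro a b p
  induction p with
  | nil => simp
  | cons h' p ih =>
      rw [prodY_cons]
      rename_i a' c' b'
      rw [ih, hH a' c' h', ← mul_assoc]

lemma prodY_map {G : SimpleGraph V} {X : Type*} [Group X] (y : V → V → X)
    (φ : G →g G) (hy : ∀ a b, y (φ a) (φ b) = y a b) :
    ∀ {a b : V} (p : G.Walk a b), prodY y (p.map φ) = prodY y p := by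
  intro a b p
  induction p with
  | nil => simp
  | cons h' p ih => simp [SimpleGraph.Walk.map_cons, ih, hy]

def pathTo {G : SimpleGraph V} (hT : G.IsTree) (a b : V) : G.Walk a b :=
  (hT.existsUnique_path a b).choose

lemma pathTo_isPath {G : SimpleGraph V} (hT : G.IsTree) (a b : V) :
    (pathTo hT a b).IsPath := (hT.existsUnique_path a b).choose_spec.1

lemma pathTo_unique {G : SimpleGraph V} (hT : G.IsTree) {a b : V} (p : G.Walk a b)
    (hp : p.IsPath) : pathTo hT a b = p := by
  have h1 := (hT.existsUnique_path a b).choose_spec.2 p hp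
  have h2 := (hT.existsUnique_path a b).choose_spec.2 _ (pathTo_isPath hT a b)
  exact h2.trans h1.symm

@[simp] lemma pathTo_self {G : SimpleGraph V} (hT : G.IsTree) (a : V) :
    pathTo hT a a = SimpleGraph.Walk.nil :=
  pathTo_unique hT _ SimpleGraph.Walk.IsPath.nil

lemma prodY_pathTo_adj {G : SimpleGraph V} {X : Type*} [Group X] (hT : G.IsTree)
    (y : V → V → X) (hy : ∀ u w, G.Adj u w → y w u = (y u w)⁻¹)
    (r : V) {u w : V} (h : G.Adj u w) :
    prodY y (pathTo hT r w) = y u w * prodY y (pathTo hT r u) := by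
  classical
  by_cases hw : w ∈ (pathTo hT r u).support
  · set p := pathTo hT r u with hpdef
    have hp : p.IsPath := pathTo_isPath hT r u
    have h1 : pathTo hT r w = p.takeUntil w hw := pathTo_unique hT _ (hp.takeUntil hw)
    have h2 : p.dropUntil w hw = SimpleGraph.Walk.cons h.symm SimpleGraph.Walk.nil := by
      have e1 := pathTo_unique hT (p.dropUntil w hw) (hp.dropUntil hw)
      have e2 := pathTo_unique hT (SimpleGraph.Walk.cons h.symm SimpleGraph.Walk.nil)
        (by simp [SimpleGraph.Walk.cons_isPath_iff, SimpleGraph.Walk.IsPath.nil, h.ne'])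
      rw [← e1, e2]
    have h3 : p = (p.takeUntil w hw).concat h.symm := by
      rw [SimpleGraph.Walk.concat_eq_append, ← h2]
      exact (SimpleGraph.Walk.take_spec p hw).symm
    have h4 : prodY y p = y w u * prodY y (p.takeUntil w hw) := by
      conv_lhs => rw [h3]
      exact prodY_concat y _ h.symm
    rw [h1, h4, hy u w h, ← mul_assoc, mul_inv_cancel, one_mul]
  · have h1 : pathTo hT r w = (pathTo hT r u).concat h := by
      refine pathTo_unique hT _ ?_
      rw [← SimpleGraph.Walk.isPath_reverse_iff, SimpleGraph.Walk.reverse_concat]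
      exact (pathTo_isPath hT r u).reverse.cons
        (by simpa [SimpleGraph.Walk.support_reverse] using hw)
    rw [h1, prodY_concat]

/-! ### The quotient groupoid -/

structure Ob (Γ : Type w) (V : Type u) [Group Γ] [MulAction Γ V] : Type max u w where
  orb : Quotient (MulAction.orbitRel Γ V)

@[ext] structure Hm (Γ : Type w) (V : Type u) [Group Γ] [MulAction Γ V] :
    Type max u w where
  g : Γ

variable {Γ : Type w} [Group Γ] [MulAction Γ V]

instance : Groupoid (Ob Γ V) where
  Hom _ _ := Hm Γ V
  id _ := ⟨1⟩
  comp p q := ⟨p.g * q.g⟩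
  id_comp _ := Hm.ext (one_mul _)
  comp_id _ := Hm.ext (mul_one _)
  assoc _ _ _ := Hm.ext (mul_assoc _ _ _)
  inv p := ⟨p.g⁻¹⟩
  inv_comp _ := Hm.ext (inv_mul_cancel _)
  comp_inv _ := Hm.ext (mul_inv_cancel _)

lemma conn (hne : Nonempty V) : IsConnected (Ob Γ V) := by
  haveI : Nonempty (Ob Γ V) := ⟨⟨Quotient.mk _ hne.some⟩⟩
  exact zigzag_isConnected fun a b =>
    Relation.ReflTransGen.single (Or.inl ⟨(⟨1⟩ : Hm Γ V)⟩)

abbrev EC (Γ : Type w) (V : Type u) [Group Γ] [MulAction Γ V] :=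
  Quotient (MulAction.orbitRel Γ (V × V))

def pi1 : EC Γ V → Quotient (MulAction.orbitRel Γ V) :=
  Quotient.map Prod.fst (by
    rintro ⟨a1, a2⟩ ⟨b1, b2⟩ ⟨γ, hγ⟩
    exact ⟨γ, congrArg Prod.fst hγ⟩)

def pi2 : EC Γ V → Quotient (MulAction.orbitRel Γ V) :=
  Quotient.map Prod.snd (by
    rintro ⟨a1, a2⟩ ⟨b1, b2⟩ ⟨γ, hγ⟩
    exact ⟨γ, congrArg Prod.snd hγ⟩)

def swapC : EC Γ V → EC Γ V :=
  Quotient.map Prod.swap (by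
    rintro ⟨a1, a2⟩ ⟨b1, b2⟩ ⟨γ, hγ⟩
    exact ⟨γ, Prod.ext (congrArg Prod.snd hγ) (congrArg Prod.fst hγ)⟩)

def posC : EC Γ V → Prop := fun q => WellOrderingRel q (swapC q)

lemma posC_dichot {q : EC Γ V} (hq : q ≠ swapC q) (hss : swapC (swapC q) = q) :
    posC q ↔ ¬ posC (swapC q) := by
  unfold posC
  rw [hss]
  constructor
  · intro h1 h2
    exact irrefl_of WellOrderingRel q (trans_of WellOrderingRel h1 h2)
  · intro h2
    rcases trichotomous_of WellOrderingRel q (swapC q) with h | h | h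
    · exact h
    · exact absurd h hq
    · exact absurd h h2

structure Arr (P : EC Γ V → Prop) (x y : Ob Γ V) : Type max u w where
  q : EC Γ V
  cond : P q ∧ pi1 q = x.orb ∧ pi2 q = y.orb

lemma mulequiv_to_freegroup_set {Γ : Type w} [Group Γ] {T : Type*}
    (e : Γ ≃* FreeGroup T) : ∃ S : Set Γ, Nonempty (Γ ≃* FreeGroup S) := by
  classical
  set j : T → Γ := fun t => e.symm (FreeGroup.of t) with hj
  have hinj : Function.Injective j := fun a b hab =>
    FreeGroup.of_injective (e.symm.injective hab)
  exact ⟨Set.range j, ⟨e.trans (FreeGroup.freeGroupCongr (Equiv.ofInjective j hinj))⟩⟩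

end
end TreeFreeAux

open TreeFreeAux CategoryTheory in
/-- Let `T` be a locally finite tree and `Γ` a group acting on `T` by isometries
(graph automorphisms) without inversion, such that every non-identity element of `Γ`
is hyperbolic (fixes no vertex). Then `Γ` is a free group. -/
theorem group_acting_freely_on_tree_is_free {V : Type*} (G : SimpleGraph V)
    (hT : G.IsTree) [G.LocallyFinite]
    (Γ : Type*) [Group Γ] [MulAction Γ V]
    (hact : ∀ (γ : Γ) (u v : V), G.Adj (γ • u) (γ • v) ↔ G.Adj u v)
    (hni : ∀ (γ : Γ) (u v : V), G.Adj u v → ¬(γ • u = v ∧ γ • v = u))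
    (hhyp : ∀ γ : Γ, γ ≠ 1 → ∀ v : V, γ • v ≠ v) :
    ∃ S : Set Γ, Nonempty (Γ ≃* FreeGroup S) := by
  classical
  haveI hne : Nonempty V := hT.isConnected.nonempty
  -- the action is free
  have hcancel : ∀ (γ₁ γ₂ : Γ) (v : V), γ₁ • v = γ₂ • v → γ₁ = γ₂ := by
    intro γ₁ γ₂ v hv
    have h0 : (γ₂⁻¹ * γ₁) • v = v := by
      rw [mul_smul, hv, inv_smul_smul]
    have h1 : γ₂⁻¹ * γ₁ = 1 := by
      by_contra hc
      exact hhyp _ hc v h0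
    exact (inv_mul_eq_one.mp h1).symm
  -- orbit representatives and the canonical translation
  have hex : ∀ v : V, ∃ γ : Γ, γ • (Quotient.mk (MulAction.orbitRel Γ V) v).out = v := by
    intro v
    exact Quotient.exact (Quotient.out_eq (Quotient.mk (MulAction.orbitRel Γ V) v)).symm
      |>.imp fun γ h => h
  set dd : V → Γ := fun v => (hex v).choose with hdddef
  have hdd : ∀ v : V, dd v • (Quotient.mk (MulAction.orbitRel Γ V) v).out = v :=
    fun v => (hex v).choose_spec
  have horb : ∀ (γ : Γ) (v : V),
      (Quotient.mk (MulAction.orbitRel Γ V) (γ • v)) = Quotient.mk _ v :=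
    fun γ v => Quotient.sound ⟨γ, rfl⟩
  have hdd_smul : ∀ (γ : Γ) (v : V), dd (γ • v) = γ * dd v := by
    intro γ v
    apply hcancel _ _ ((Quotient.mk (MulAction.orbitRel Γ V) v).out)
    conv_lhs => rw [← horb γ v]
    rw [hdd (γ • v), mul_smul, hdd v]
  have hdd_out : ∀ x : Quotient (MulAction.orbitRel Γ V), dd x.out = 1 := by
    intro x
    apply hcancel _ _ x.out
    have h0 := hdd x.out
    rw [Quotient.out_eq] at h0
    rw [h0, one_smul]
  -- base point
  set x0 : Quotient (MulAction.orbitRel Γ V) := Quotient.mk _ (Classical.arbitrary V)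
    with hx0def
  set vstar : V := x0.out with hvstardef
  have hvstar : Quotient.mk (MulAction.orbitRel Γ V) vstar = x0 := Quotient.out_eq x0
  have hdd_vstar : dd vstar = 1 := hdd_out x0
  -- adjacency on edge classes
  set AdjC : EC Γ V → Prop := Quotient.lift (fun e : V × V => G.Adj e.1 e.2) (by
    rintro ⟨a1, a2⟩ ⟨b1, b2⟩ ⟨γ, hγ⟩
    have h1 : γ • b1 = a1 := congrArg Prod.fst hγ
    have h2 : γ • b2 = a2 := congrArg Prod.snd hγ
    subst h1; subst h2
    simp only [eq_iff_iff]
    exact hact γ b1 b2) with hAdjCdef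
  -- swap facts
  have hswapswap : ∀ q : EC Γ V, swapC (swapC q) = q := by
    intro q
    induction q using Quotient.ind with
    | _ e => rcases e with ⟨a, b⟩; rfl
  have hadj_ne : ∀ u w : V, G.Adj u w →
      (Quotient.mk (MulAction.orbitRel Γ (V × V)) (u, w) : EC Γ V) ≠ Quotient.mk _ (w, u) := by
    intro u w h heq
    obtain ⟨γ, hγ⟩ := Quotient.exact heq
    exact hni γ u w h ⟨congrArg Prod.snd hγ, congrArg Prod.fst hγ⟩
  have hdich : ∀ u w : V, G.Adj u w →
      (posC (Quotient.mk (MulAction.orbitRel Γ (V × V)) (u, w) : EC Γ V) ↔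
        ¬ posC (Quotient.mk _ (w, u) : EC Γ V)) := by
    intro u w h
    exact posC_dichot (hadj_ne u w h) (hswapswap _)
  -- the group element attached to an edge class
  set el : EC Γ V → Γ := Quotient.lift (fun e : V × V => (dd e.1)⁻¹ * dd e.2) (by
    rintro ⟨a1, a2⟩ ⟨b1, b2⟩ ⟨γ, hγ⟩
    have h1 : γ • b1 = a1 := congrArg Prod.fst hγ
    have h2 : γ • b2 = a2 := congrArg Prod.snd hγ
    subst h1; subst h2
    dsimp only
    rw [hdd_smul, hdd_smul, mul_inv_rev, mul_assoc, inv_mul_cancel_left]) with heldef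
  -- the free groupoid instance
  letI iFree : IsFreeGroupoid (Ob Γ V) := by
    refine
      { quiverGenerators := ⟨fun x y => Arr (fun q => AdjC q ∧ posC q) x y⟩
        of := fun {a b} e => (⟨el e.q⟩ : Hm Γ V)
        unique_lift := ?_ }
    intro X _ f
    -- edge labels
    set lab : EC Γ V → X := fun q =>
      if h : AdjC q ∧ posC q then
        f (a := ⟨pi1 q⟩) (b := ⟨pi2 q⟩) ⟨q, h, rfl, rfl⟩
      else 1 with hlabdef
    set y : V → V → X := fun u' w' =>
      if G.Adj u' w' then
        (if posC (Quotient.mk (MulAction.orbitRel Γ (V × V)) (u', w')) then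
          lab (Quotient.mk _ (u', w'))
        else (lab (Quotient.mk _ (w', u')))⁻¹)
      else 1 with hydef
    have hy_pos : ∀ u' w' : V, G.Adj u' w' →
        posC (Quotient.mk (MulAction.orbitRel Γ (V × V)) (u', w')) →
        y u' w' = lab (Quotient.mk _ (u', w')) := by
      intro u' w' h hp
      rw [hydef]
      simp only [if_pos h, if_pos hp]
    have hy_neg : ∀ u' w' : V, G.Adj u' w' →
        ¬ posC (Quotient.mk (MulAction.orbitRel Γ (V × V)) (u', w')) →
        y u' w' = (lab (Quotient.mk _ (w', u')))⁻¹ := by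
      intro u' w' h hp
      rw [hydef]
      simp only [if_pos h, if_neg hp]
    have hy_inv : ∀ u' w' : V, G.Adj u' w' → y w' u' = (y u' w')⁻¹ := by
      intro u' w' h
      by_cases hp : posC (Quotient.mk (MulAction.orbitRel Γ (V × V)) (u', w'))
      · rw [hy_pos u' w' h hp, hy_neg w' u' h.symm ((hdich u' w' h).mp hp)]
      · have hp' : posC (Quotient.mk (MulAction.orbitRel Γ (V × V)) (w', u')) :=
          (hdich w' u' h.symm).mpr hp
        rw [hy_pos w' u' h.symm hp', hy_neg u' w' h hp, inv_inv]
    have hy_smul : ∀ (γ : Γ) (a b : V), y (γ • a) (γ • b) = y a b := by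
      intro γ a b
      have e1 : (Quotient.mk (MulAction.orbitRel Γ (V × V)) (γ • a, γ • b) : EC Γ V) =
          Quotient.mk _ (a, b) := Quotient.sound ⟨γ, rfl⟩
      have e2 : (Quotient.mk (MulAction.orbitRel Γ (V × V)) (γ • b, γ • a) : EC Γ V) =
          Quotient.mk _ (b, a) := Quotient.sound ⟨γ, rfl⟩
      rw [hydef]
      simp only [e1, e2, hact]
    -- the developing map
    set D : V → X := fun v => prodY y (pathTo hT vstar v) with hDdef
    have hrec : ∀ u' w' : V, G.Adj u' w' → D w' = y u' w' * D u' :=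
      fun u' w' h => prodY_pathTo_adj hT y hy_inv vstar h
    have hDvstar : D vstar = 1 := by
      rw [hDdef]
      simp only [pathTo_self, prodY_nil]
    set χ : Γ → X := fun γ => D (γ • vstar) with hχdef
    have hequi : ∀ (γ : Γ) (v : V), D (γ • v) = D v * χ γ := by
      intro γ v
      set φ : G →g G := ⟨fun a => γ • a, fun {a b} h => (hact γ a b).mpr h⟩ with hφdef
      have h1 : D (γ • v) = prodY y ((pathTo hT vstar v).map φ) * D (γ • vstar) :=
        prodY_walk_eq y D hrec ((pathTo hT vstar v).map φ)
      rw [prodY_map y φ (fun a b => hy_smul γ a b)] at h1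
      have h2 := prodY_walk_eq y D hrec (pathTo hT vstar v)
      rw [hDvstar, mul_one] at h2
      rw [h1, ← h2]
    have hchi_mul : ∀ γ δ : Γ, χ (γ * δ) = χ δ * χ γ := by
      intro γ δ
      show D ((γ * δ) • vstar) = _
      rw [mul_smul, hequi γ (δ • vstar)]
    have hchi_one : χ 1 = 1 := by
      show D ((1 : Γ) • vstar) = 1
      rw [one_smul, hDvstar]
    have hchi_inv : ∀ γ : Γ, χ γ⁻¹ = (χ γ)⁻¹ := by
      intro γ
      have h0 := hchi_mul γ⁻¹ γ
      rw [inv_mul_cancel, hchi_one] at h0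
      exact (inv_eq_of_mul_eq_one_right h0.symm).symm
    set E : Ob Γ V → X := fun o => D o.orb.out with hEdef
    have hE : ∀ v : V, E ⟨Quotient.mk (MulAction.orbitRel Γ V) v⟩ = D v * (χ (dd v))⁻¹ := by
      intro v
      show D ((Quotient.mk (MulAction.orbitRel Γ V) v).out) = _
      have h1 : D v = D ((Quotient.mk (MulAction.orbitRel Γ V) v).out) * χ (dd v) := by
        conv_lhs => rw [← hdd v]
        exact hequi (dd v) _
      rw [h1, mul_inv_cancel_right]
    -- the functor
    set F0 : Ob Γ V ⥤ SingleObj X :=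
      { obj := fun _ => SingleObj.star X
        map := fun {a b} p => (E b * χ p.g * (E a)⁻¹ : X)
        map_id := by
          intro o
          show (E o * χ 1 * (E o)⁻¹ : X) = 𝟙 (SingleObj.star X)
          rw [SingleObj.id_as_one, hchi_one, mul_one, mul_inv_cancel]
        map_comp := by
          intro x y z p q
          show (E z * χ (p.g * q.g) * (E x)⁻¹ : X) = _
          rw [SingleObj.comp_as_mul, hchi_mul]
          show _ = (E z * χ q.g * (E y)⁻¹) * (E y * χ p.g * (E x)⁻¹)
          group } with hF0def
    have hkey : ∀ (q : EC Γ V) (hq : AdjC q ∧ posC q),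
        E ⟨pi2 q⟩ * χ (el q) * (E ⟨pi1 q⟩)⁻¹ = lab q := by
      intro q
      induction q using Quotient.ind with
      | _ e0 =>
        obtain ⟨u', w'⟩ := e0
        intro hq
        have hadj : G.Adj u' w' := hq.1
        have hpos : posC (Quotient.mk (MulAction.orbitRel Γ (V × V)) (u', w')) := hq.2
        have hyD : y u' w' = D w' * (D u')⁻¹ := by
          rw [hrec u' w' hadj, mul_inv_cancel_right]
        show E ⟨Quotient.mk (MulAction.orbitRel Γ V) w'⟩ * χ ((dd u')⁻¹ * dd w') *
            (E ⟨Quotient.mk (MulAction.orbitRel Γ V) u'⟩)⁻¹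
            = lab (Quotient.mk _ (u', w'))
        rw [hE u', hE w', hchi_mul, hchi_inv, ← hy_pos u' w' hadj hpos, hyD]
        group
    refine ⟨F0, ?_, ?_⟩
    · -- the functor agrees with the labelling on generators
      intro a b e
      obtain ⟨aorb⟩ := a
      obtain ⟨borb⟩ := b
      obtain ⟨q, cond⟩ := e
      have hs : pi1 q = aorb := cond.2.1
      have ht : pi2 q = borb := cond.2.2
      subst hs
      subst ht
      have h2 : lab q = f (⟨q, cond⟩ : Arr (fun q => AdjC q ∧ posC q) ⟨pi1 q⟩ ⟨pi2 q⟩) := by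
        rw [hlabdef]
        exact dif_pos cond.1
      exact (hkey q cond.1).trans h2
    · -- uniqueness
      intro F' hF'
      have uid : ∀ x : Ob Γ V, F'.map (𝟙 x) = (1 : X) := by
        intro x
        rw [F'.map_id]
        exact SingleObj.id_as_one (M := X) (F'.obj x)
      set p0 : Ob Γ V := ⟨x0⟩ with hp0def
      set cF : Ob Γ V → X := fun o => F'.map (show p0 ⟶ o from ⟨1⟩) with hcFdef
      set χF : Γ → X := fun γ => F'.map (show p0 ⟶ p0 from ⟨γ⟩) with hχFdef
      have hcomp : ∀ (x y z : Ob Γ V) (γ δ : Γ),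
          F'.map (show x ⟶ z from ⟨γ * δ⟩) =
            F'.map (show y ⟶ z from ⟨δ⟩) * F'.map (show x ⟶ y from ⟨γ⟩) := by
        intro x y z γ δ
        have h0 : (show x ⟶ z from ⟨γ * δ⟩) =
            (show x ⟶ y from ⟨γ⟩) ≫ (show y ⟶ z from ⟨δ⟩) := rfl
        rw [h0, F'.map_comp, SingleObj.comp_as_mul]
      have hcF_p0 : cF p0 = 1 := uid p0
      have hchiF_one : χF 1 = 1 := uid p0
      have hchiF_mul : ∀ γ δ : Γ, χF (γ * δ) = χF δ * χF γ := fun γ δ => hcomp p0 p0 p0 γ δ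
      have hchiF_inv : ∀ γ : Γ, χF γ⁻¹ = (χF γ)⁻¹ := by
        intro γ
        have h0 := hchiF_mul γ⁻¹ γ
        rw [inv_mul_cancel, hchiF_one] at h0
        exact (inv_eq_of_mul_eq_one_right h0.symm).symm
      have hdecomp : ∀ (x y : Ob Γ V) (γ : Γ),
          F'.map (show x ⟶ y from ⟨γ⟩) = cF y * χF γ * (cF x)⁻¹ := by
        intro x y γ
        have h1 : F'.map (show x ⟶ y from ⟨γ⟩) =
            F'.map (show p0 ⟶ y from ⟨γ⟩) * F'.map (show x ⟶ p0 from ⟨1⟩) := by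
          have h0 := hcomp x p0 y 1 γ
          rw [one_mul] at h0
          exact h0
        have h2 : F'.map (show p0 ⟶ y from ⟨γ⟩) = cF y * χF γ := by
          have h0 := hcomp p0 p0 y γ 1
          rw [mul_one] at h0
          exact h0
        have h3 : F'.map (show x ⟶ p0 from ⟨1⟩) = (cF x)⁻¹ := by
          have h0 : χF 1 = F'.map (show x ⟶ p0 from ⟨1⟩) * cF x := by
            have h00 := hcomp p0 x p0 1 1
            rw [one_mul] at h00
            exact h00
          rw [hchiF_one] at h0
          exact eq_inv_of_mul_eq_one_left h0.symm
        rw [h1, h2, h3]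
      set DF : V → X :=
        fun v => cF ⟨Quotient.mk (MulAction.orbitRel Γ V) v⟩ * χF (dd v) with hDFdef
      have hDFvstar : DF vstar = 1 := by
        have e1 : (⟨Quotient.mk (MulAction.orbitRel Γ V) vstar⟩ : Ob Γ V) = p0 :=
          congrArg Ob.mk hvstar
        show cF ⟨Quotient.mk (MulAction.orbitRel Γ V) vstar⟩ * χF (dd vstar) = 1
        rw [e1, hcF_p0, hdd_vstar, hchiF_one, mul_one]
      have harr : ∀ (u' w' : V), G.Adj u' w' →
          (hpos : posC (Quotient.mk (MulAction.orbitRel Γ (V × V)) (u', w'))) →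
          lab (Quotient.mk (MulAction.orbitRel Γ (V × V)) (u', w')) =
            cF ⟨Quotient.mk (MulAction.orbitRel Γ V) w'⟩ * χF ((dd u')⁻¹ * dd w') *
              (cF ⟨Quotient.mk (MulAction.orbitRel Γ V) u'⟩)⁻¹ := by
        intro u' w' hadj hpos
        have harrow := hF' ⟨Quotient.mk (MulAction.orbitRel Γ V) u'⟩
          ⟨Quotient.mk (MulAction.orbitRel Γ V) w'⟩
          ⟨Quotient.mk (MulAction.orbitRel Γ (V × V)) (u', w'), ⟨⟨hadj, hpos⟩, rfl, rfl⟩⟩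
        have h2 : lab (Quotient.mk (MulAction.orbitRel Γ (V × V)) (u', w')) =
            f (a := ⟨Quotient.mk (MulAction.orbitRel Γ V) u'⟩)
              (b := ⟨Quotient.mk (MulAction.orbitRel Γ V) w'⟩)
              ⟨Quotient.mk (MulAction.orbitRel Γ (V × V)) (u', w'), ⟨⟨hadj, hpos⟩, rfl, rfl⟩⟩ :=
          dif_pos ⟨hadj, hpos⟩
        rw [h2, ← harrow]
        exact hdecomp ⟨Quotient.mk (MulAction.orbitRel Γ V) u'⟩
          ⟨Quotient.mk (MulAction.orbitRel Γ V) w'⟩ ((dd u')⁻¹ * dd w')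
      have hrecF : ∀ u' w' : V, G.Adj u' w' → DF w' = y u' w' * DF u' := by
        intro u' w' hadj
        by_cases hpos : posC (Quotient.mk (MulAction.orbitRel Γ (V × V)) (u', w'))
        · rw [hy_pos u' w' hadj hpos, harr u' w' hadj hpos]
          show cF ⟨Quotient.mk (MulAction.orbitRel Γ V) w'⟩ * χF (dd w') =
            cF ⟨Quotient.mk (MulAction.orbitRel Γ V) w'⟩ * χF ((dd u')⁻¹ * dd w') *
              (cF ⟨Quotient.mk (MulAction.orbitRel Γ V) u'⟩)⁻¹ *
              (cF ⟨Quotient.mk (MulAction.orbitRel Γ V) u'⟩ * χF (dd u'))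
          rw [hchiF_mul, hchiF_inv]
          group
        · have hpos' : posC (Quotient.mk (MulAction.orbitRel Γ (V × V)) (w', u')) :=
            (hdich w' u' hadj.symm).mpr hpos
          rw [hy_neg u' w' hadj hpos, harr w' u' hadj.symm hpos']
          show cF ⟨Quotient.mk (MulAction.orbitRel Γ V) w'⟩ * χF (dd w') =
            (cF ⟨Quotient.mk (MulAction.orbitRel Γ V) u'⟩ * χF ((dd w')⁻¹ * dd u') *
              (cF ⟨Quotient.mk (MulAction.orbitRel Γ V) w'⟩)⁻¹)⁻¹ *
              (cF ⟨Quotient.mk (MulAction.orbitRel Γ V) u'⟩ * χF (dd u'))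
          rw [hchiF_mul, hchiF_inv]
          group
      have hDF_eq : ∀ v : V, DF v = D v := by
        intro v
        have h1 := prodY_walk_eq y DF hrecF (pathTo hT vstar v)
        rw [hDFvstar, mul_one] at h1
        have h2 := prodY_walk_eq y D hrec (pathTo hT vstar v)
        rw [hDvstar, mul_one] at h2
        rw [h1, h2]
      have hchiF_eq : ∀ γ : Γ, χF γ = χ γ := by
        intro γ
        have h1 : DF (γ • vstar) = χF γ := by
          have e1 : (⟨Quotient.mk (MulAction.orbitRel Γ V) (γ • vstar)⟩ : Ob Γ V) = p0 :=
            congrArg Ob.mk ((horb γ vstar).trans hvstar)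
          show cF ⟨Quotient.mk (MulAction.orbitRel Γ V) (γ • vstar)⟩ * χF (dd (γ • vstar)) = χF γ
          rw [e1, hcF_p0, hdd_smul, hdd_vstar, mul_one, one_mul]
        rw [← h1, hDF_eq]
      have hcF_eq : ∀ o : Ob Γ V, cF o = E o := by
        intro o
        obtain ⟨xq⟩ := o
        have h1 : DF xq.out = cF ⟨xq⟩ := by
          show cF ⟨Quotient.mk (MulAction.orbitRel Γ V) xq.out⟩ * χF (dd xq.out) = cF ⟨xq⟩
          rw [congrArg Ob.mk (Quotient.out_eq xq), hdd_out, hchiF_one, mul_one]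
        rw [← h1, hDF_eq]
      apply Functor.hext
      · intro x
        exact Subsingleton.elim _ _
      · intro x y p
        refine heq_of_eq ?_
        have h0 := hdecomp x y p.g
        have hp : (show x ⟶ y from ⟨p.g⟩) = p := rfl
        rw [hp] at h0
        rw [h0, hchiF_eq, hcF_eq, hcF_eq]
  -- conclude via Nielsen–Schreier machinery: the vertex group of a connected free
  -- groupoid is free, and the vertex group here is `Γ` (with opposite multiplication)
  haveI hconn : IsConnected (Ob Γ V) := conn hne
  set p0 : Ob Γ V := ⟨x0⟩ with hp0def
  haveI hfreeEnd : IsFreeGroup (End p0) := IsFreeGroupoid.endIsFreeOfConnectedFree p0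
  have e2 : Γ ≃* End p0 :=
    { toFun := fun γ => (show p0 ⟶ p0 from ⟨γ⁻¹⟩)
      invFun := fun e => (Hm.g e)⁻¹
      left_inv := fun γ => by simp
      right_inv := fun e => Hm.ext (inv_inv _)
      map_mul' := fun γ δ => Hm.ext (mul_inv_rev γ δ) }
  exact mulequiv_to_freegroup_set (e2.trans (IsFreeGroup.toFreeGroup (End p0)))
end
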